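/- arXiv:0904.1045 — 4 statements merged into one kernel-verified Lean document; each statement's English description precedes it below -/
import Mathlib

section
/- For all 2 ≤ i ≤ l and m1,n1,m2,n2 ∈ Z, [e_{1i}(m1,n1), e_{11}(m2,n2)] = −q^{n2 m1} e_{1i}(m1+m2, n1+n2). -/
open MvPolynomial

/-- Index set `{2, …, l}` for the variables. -/
abbrev Idx (l : ℕ) := {i : ℕ // 2 ≤ i ∧ i ≤ l}

/-- The polynomial ring `V = ℂ[x_i(m,n) : 2 ≤ i ≤ l, (m,n) ∈ ℤ²]`. -/
abbrev V (l : ℕ) := MvPolynomial (Idx l × ℤ × ℤ) ℂ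

/-- `e_{ij}(m1,n1) = Σ_{(m,n)} q^{m n1} x_i(m1+m, n1+n) ∂/∂x_j(m,n)`, for `2 ≤ i,j ≤ l`. -/
noncomputable def eGen (l : ℕ) (q : ℂ) (i j : Idx l) (m1 n1 : ℤ) (p : V l) : V l :=
  ∑ᶠ mn : ℤ × ℤ,
    q ^ (mn.1 * n1) • (X (i, m1 + mn.1, n1 + mn.2) * pderiv (j, mn.1, mn.2) p)

/-- `e_{i1}(m,n)` = multiplication by the variable `x_i(m,n)`. -/
noncomputable def eLow (l : ℕ) (i : Idx l) (m n : ℤ) (p : V l) : V l :=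
  X (i, m, n) * p

/-- `e_{11}(m1,n1) = μ δ_{(m1,n1),(0,0)} − Σ_{j=2}^l Σ_{(m,n)} q^{n m1} x_j(m1+m, n1+n) ∂/∂x_j(m,n)`. -/
noncomputable def e11 (l : ℕ) (q μ : ℂ) (m1 n1 : ℤ) (p : V l) : V l :=
  (if (m1, n1) = ((0 : ℤ), (0 : ℤ)) then μ else 0) • p
  - ∑ᶠ j : Idx l, ∑ᶠ mn : ℤ × ℤ,
      q ^ (mn.2 * m1) • (X (j, m1 + mn.1, n1 + mn.2) * pderiv (j, mn.1, mn.2) p)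

/-- `e_{1i}(m1,n1) = q^{−m1 n1} μ ∂/∂x_i(−m1,−n1)
  − Σ_{j=2}^l Σ_{(m,n),(m',n')} q^{n1 m' + n m1 + n m'}
      x_j(m1+m+m', n1+n+n') ∂/∂x_j(m,n) ∂/∂x_i(m',n')`, for `2 ≤ i ≤ l`. -/
noncomputable def eUp (l : ℕ) (q μ : ℂ) (i : Idx l) (m1 n1 : ℤ) (p : V l) : V l :=
  q ^ (-(m1 * n1)) • μ • pderiv (i, -m1, -n1) p
  - ∑ᶠ j : Idx l, ∑ᶠ mm : (ℤ × ℤ) × (ℤ × ℤ),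
      q ^ (n1 * mm.2.1 + mm.1.2 * m1 + mm.1.2 * mm.2.1) •
        (X (j, m1 + mm.1.1 + mm.2.1, n1 + mm.1.2 + mm.2.2) *
          pderiv (j, mm.1.1, mm.1.2) (pderiv (i, mm.2.1, mm.2.2) p))

/-- Degree operator `D1 = Σ_{i=2}^l Σ_{(m,n)} m · x_i(m,n) ∂/∂x_i(m,n)`. -/
noncomputable def D1 (l : ℕ) (p : V l) : V l :=
  ∑ᶠ i : Idx l, ∑ᶠ mn : ℤ × ℤ,
    (mn.1 : ℂ) • (X (i, mn.1, mn.2) * pderiv (i, mn.1, mn.2) p)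

/-- Degree operator `D2 = Σ_{i=2}^l Σ_{(m,n)} n · x_i(m,n) ∂/∂x_i(m,n)`. -/
noncomputable def D2 (l : ℕ) (p : V l) : V l :=
  ∑ᶠ i : Idx l, ∑ᶠ mn : ℤ × ℤ,
    (mn.2 : ℂ) • (X (i, mn.1, mn.2) * pderiv (i, mn.1, mn.2) p)

/-- Commutator `[A,B] = A∘B − B∘A` of operators on `V`. -/
noncomputable def oComm {l : ℕ} (A B : V l → V l) : V l → V l := fun p => A (B p) - B (A p)


section Aux1
open MvPolynomial Function

instance idxFinite (l : ℕ) : Finite (Idx l) := by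
  refine Finite.of_injective (fun x : Idx l => (⟨x.1, Nat.lt_succ_of_le x.2.2⟩ : Fin (l+1))) ?_
  intro a b h
  ext
  simpa [Fin.ext_iff] using h

theorem pd_comm {σ R : Type*} [CommSemiring R] (u v : σ) (p : MvPolynomial σ R) :
    pderiv u (pderiv v p) = pderiv v (pderiv u p) := by
  classical
  induction p using MvPolynomial.induction_on' with
  | monomial s a =>
    rcases eq_or_ne u v with rfl | h
    · rfl
    · rw [pderiv_monomial, pderiv_monomial, pderiv_monomial, pderiv_monomial]
      rw [Finsupp.tsub_apply, Finsupp.tsub_apply, Finsupp.single_apply, Finsupp.single_apply,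
        if_neg h, if_neg (Ne.symm h)]
      simp only [Nat.sub_zero]
      rw [tsub_right_comm]
      ring_nf
  | add p q hp hq => simp [hp, hq]

theorem vars_pd_subset {σ : Type*} (v : σ) (p : MvPolynomial σ ℂ) :
    (pderiv v p).vars ⊆ p.vars := by
  classical
  intro u hu
  nth_rewrite 1 [p.as_sum] at hu
  rw [map_sum] at hu
  have := MvPolynomial.vars_sum_subset (R := ℂ) p.support
      (fun d => pderiv v (monomial d (coeff d p))) hu
  rw [Finset.mem_biUnion] at this
  obtain ⟨d, hd, hud⟩ := this
  simp only [pderiv_monomial] at hud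
  by_cases hc : (coeff d p * (d v : ℂ)) = 0
  · rw [hc] at hud; simp at hud
  · rw [vars_monomial hc] at hud
    have hsub : u ∈ d.support := by
      have := Finsupp.support_tsub (f1 := d) (f2 := Finsupp.single v 1) hud
      exact this
    exact (mem_vars u).2 ⟨d, hd, hsub⟩

end Aux1

section Aux2
open MvPolynomial Function

variable {l : ℕ}

/-- projection of the variable set to `ℤ × ℤ`. -/
def S2 (p : V l) : Set (ℤ × ℤ) := (fun v : Idx l × ℤ × ℤ => v.2) '' ↑p.vars

theorem S2_finite (p : V l) : (S2 p).Finite := p.vars.finite_toSet.image _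

theorem mem_S2 {p : V l} {j : Idx l} {a : ℤ × ℤ} (h : pderiv (j, a.1, a.2) p ≠ 0) :
    a ∈ S2 p := by
  have hv : ((j, a.1, a.2) : Idx l × ℤ × ℤ) ∈ p.vars := by
    by_contra hc
    exact h (pderiv_eq_zero_of_notMem_vars hc)
  exact ⟨(j, a.1, a.2), hv, rfl⟩

theorem S2_pd_subset {p : V l} (v : Idx l × ℤ × ℤ) : S2 (pderiv v p) ⊆ S2 p :=
  Set.image_mono (Finset.coe_subset.mpr (vars_pd_subset v p))

theorem fin_a (p : V l) (k : Idx l) (G : ℤ × ℤ → V l → V l) (hG : ∀ a, G a 0 = 0) :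
    (Function.support fun a : ℤ × ℤ => G a (pderiv (k, a.1, a.2) p)).Finite := by
  apply (S2_finite p).subset
  intro a ha
  have h1 : pderiv (k, a.1, a.2) p ≠ 0 := by
    intro h0
    exact ha (by simp [h0, hG])
  exact mem_S2 h1

theorem fin_mm (p : V l) (i j : Idx l) (G : (ℤ × ℤ) × ℤ × ℤ → V l → V l)
    (hG : ∀ x, G x 0 = 0) :
    (Function.support fun mm : (ℤ × ℤ) × ℤ × ℤ =>
      G mm (pderiv (j, mm.1.1, mm.1.2) (pderiv (i, mm.2.1, mm.2.2) p))).Finite := by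
  apply ((S2_finite p).prod (S2_finite p)).subset
  intro mm hmm
  have h1 : pderiv (j, mm.1.1, mm.1.2) (pderiv (i, mm.2.1, mm.2.2) p) ≠ 0 := by
    intro h0
    exact hmm (by simp [h0, hG])
  have h2 : pderiv (i, mm.2.1, mm.2.2) p ≠ 0 := by
    intro h0
    exact h1 (by simp [h0])
  exact ⟨S2_pd_subset _ (mem_S2 h1), mem_S2 h2⟩

theorem pd_finsum {α : Type*} (v : Idx l × ℤ × ℤ) (f : α → V l)
    (hf : (Function.support f).Finite) :
    pderiv v (∑ᶠ x, f x) = ∑ᶠ x, pderiv v (f x) := by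
  have h := AddMonoidHom.map_finsum (f := f)
    ((pderiv v : Derivation ℂ (V l) (V l)).toLinearMap.toAddMonoidHom) hf
  simpa using h

theorem finsum_prod_swap {α β M : Type*} [AddCommMonoid M] (f : α → β → M)
    (h : (Function.support fun x : α × β => f x.1 x.2).Finite) :
    ∑ᶠ a, ∑ᶠ b, f a b = ∑ᶠ b, ∑ᶠ a, f a b := by
  have h2 : (Function.support fun x : β × α => f x.2 x.1).Finite := by
    apply (h.image Prod.swap).subset
    intro x hx
    exact ⟨(x.2, x.1), hx, rfl⟩
  rw [← finsum_curry _ h, ← finsum_curry _ h2]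
  exact finsum_comp_equiv (Equiv.prodComm α β) (f := fun y : β × α => f y.2 y.1)

theorem support_finsum_subset {α β M : Type*} [AddCommMonoid M] (f : α → β → M) :
    (Function.support fun a => ∑ᶠ b, f a b) ⊆
      Prod.fst '' (Function.support fun x : α × β => f x.1 x.2) := by
  intro a ha
  have : ∃ b, f a b ≠ 0 := by
    by_contra hc
    push_neg at hc
    exact ha (finsum_eq_zero_of_forall_eq_zero hc)
  obtain ⟨b, hb⟩ := this
  exact ⟨(a, b), hb, rfl⟩

theorem finsum_swap4 {α β γ δ M : Type*} [AddCommMonoid M] (f : α → β → γ → δ → M)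
    (h : (Function.support fun x : (α × β) × γ × δ => f x.1.1 x.1.2 x.2.1 x.2.2).Finite) :
    ∑ᶠ a, ∑ᶠ b, ∑ᶠ c, ∑ᶠ d, f a b c d = ∑ᶠ c, ∑ᶠ d, ∑ᶠ a, ∑ᶠ b, f a b c d := by
  have hslice : ∀ x : α × β,
      (Function.support fun y : γ × δ => f x.1 x.2 y.1 y.2).Finite := by
    intro x
    apply Set.Finite.preimage (f := fun y : γ × δ => (x, y)) _ h
    intro y1 _ y2 _ hy
    simpa using hy
  have hslice2 : ∀ y : γ × δ,
      (Function.support fun x : α × β => f x.1 x.2 y.1 y.2).Finite := by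
    intro y
    apply Set.Finite.preimage (f := fun x : α × β => (x, y)) _ h
    intro x1 _ x2 _ hx
    simpa using hx
  have step1 : ∀ a b, ∑ᶠ c, ∑ᶠ d, f a b c d = ∑ᶠ y : γ × δ, f a b y.1 y.2 := by
    intro a b
    exact (finsum_curry _ (hslice (a, b))).symm
  have step2 : ∀ c d, ∑ᶠ a, ∑ᶠ b, f a b c d = ∑ᶠ x : α × β, f x.1 x.2 c d := by
    intro c d
    exact (finsum_curry _ (hslice2 (c, d))).symm
  calc ∑ᶠ a, ∑ᶠ b, ∑ᶠ c, ∑ᶠ d, f a b c d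
      = ∑ᶠ a, ∑ᶠ b, ∑ᶠ y : γ × δ, f a b y.1 y.2 := by
        congr 1; funext a; congr 1; funext b; exact step1 a b
    _ = ∑ᶠ x : α × β, ∑ᶠ y : γ × δ, f x.1 x.2 y.1 y.2 := by
        refine (finsum_curry (fun x : α × β => ∑ᶠ y : γ × δ, f x.1 x.2 y.1 y.2) ?_).symm
        apply ((h.image Prod.fst).subset (support_finsum_subset _))
    _ = ∑ᶠ y : γ × δ, ∑ᶠ x : α × β, f x.1 x.2 y.1 y.2 := by
        apply finsum_prod_swap _ h
    _ = ∑ᶠ c, ∑ᶠ d, ∑ᶠ x : α × β, f x.1 x.2 c d := by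
        refine finsum_curry (fun y : γ × δ => ∑ᶠ x : α × β, f x.1 x.2 y.1 y.2) ?_
        apply (((h.image Prod.swap).image Prod.fst).subset)
        refine (support_finsum_subset (fun (y : γ × δ) (x : α × β) => f x.1 x.2 y.1 y.2)).trans
          (Set.image_mono ?_)
        intro z hz
        exact ⟨(z.2, z.1), hz, rfl⟩
    _ = ∑ᶠ c, ∑ᶠ d, ∑ᶠ a, ∑ᶠ b, f a b c d := by
        congr 1; funext c; congr 1; funext d; exact (step2 c d).symm

theorem support_add' {β M : Type*} [AddCommMonoid M] (f g : β → M) :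
    (Function.support fun b => f b + g b) ⊆ Function.support f ∪ Function.support g := by
  intro b hb
  simp only [Function.mem_support] at hb
  by_contra hc
  simp only [Set.mem_union, Function.mem_support, not_or, not_not] at hc
  exact hb (by rw [hc.1, hc.2, add_zero])

theorem support_sub' {β M : Type*} [AddCommGroup M] (f g : β → M) :
    (Function.support fun b => f b - g b) ⊆ Function.support f ∪ Function.support g := by
  intro b hb
  simp only [Function.mem_support] at hb
  by_contra hc
  simp only [Set.mem_union, Function.mem_support, not_or, not_not] at hc
  exact hb (by rw [hc.1, hc.2, sub_zero])

end Aux2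

section Aux3
open MvPolynomial Function

variable {l : ℕ}

theorem pd_mul_X (v u : Idx l × ℤ × ℤ) (w : V l) :
    pderiv v (X u * w) = (if u = v then w else 0) + X u * pderiv v w := by
  classical
  rw [pderiv_mul, pderiv_X, Pi.single_apply, ite_mul, one_mul, zero_mul]

theorem pd_ite (v : Idx l × ℤ × ℤ) (c : Prop) [Decidable c] (w : V l) :
    pderiv v (if c then w else 0) = if c then pderiv v w else 0 := by
  split <;> simp

theorem eUp_add (q μ : ℂ) (i : Idx l) (m1 n1 : ℤ) (p r : V l) :
    eUp l q μ i m1 n1 (p + r) = eUp l q μ i m1 n1 p + eUp l q μ i m1 n1 r := by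
  unfold eUp
  have hsum : ∀ s : V l, ∀ j : Idx l,
      (Function.support fun mm : (ℤ × ℤ) × ℤ × ℤ =>
        q ^ (n1 * mm.2.1 + mm.1.2 * m1 + mm.1.2 * mm.2.1) •
          (X (j, m1 + mm.1.1 + mm.2.1, n1 + mm.1.2 + mm.2.2) *
            pderiv (j, mm.1.1, mm.1.2) (pderiv (i, mm.2.1, mm.2.2) s))).Finite := by
    intro s j
    exact fin_mm s i j (fun mm w => q ^ (n1 * mm.2.1 + mm.1.2 * m1 + mm.1.2 * mm.2.1) •
      (X (j, m1 + mm.1.1 + mm.2.1, n1 + mm.1.2 + mm.2.2) * w)) (by simp)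
  have h1 : ∀ j : Idx l,
      (∑ᶠ mm : (ℤ × ℤ) × ℤ × ℤ,
        q ^ (n1 * mm.2.1 + mm.1.2 * m1 + mm.1.2 * mm.2.1) •
          (X (j, m1 + mm.1.1 + mm.2.1, n1 + mm.1.2 + mm.2.2) *
            pderiv (j, mm.1.1, mm.1.2) (pderiv (i, mm.2.1, mm.2.2) (p + r))))
      = (∑ᶠ mm : (ℤ × ℤ) × ℤ × ℤ,
        q ^ (n1 * mm.2.1 + mm.1.2 * m1 + mm.1.2 * mm.2.1) •
          (X (j, m1 + mm.1.1 + mm.2.1, n1 + mm.1.2 + mm.2.2) *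
            pderiv (j, mm.1.1, mm.1.2) (pderiv (i, mm.2.1, mm.2.2) p)))
      + (∑ᶠ mm : (ℤ × ℤ) × ℤ × ℤ,
        q ^ (n1 * mm.2.1 + mm.1.2 * m1 + mm.1.2 * mm.2.1) •
          (X (j, m1 + mm.1.1 + mm.2.1, n1 + mm.1.2 + mm.2.2) *
            pderiv (j, mm.1.1, mm.1.2) (pderiv (i, mm.2.1, mm.2.2) r))) := by
    intro j
    rw [← finsum_add_distrib (hsum p j) (hsum r j)]
    apply finsum_congr
    intro mm
    simp only [map_add, mul_add, smul_add]
  rw [finsum_congr h1, finsum_add_distrib (Set.toFinite _) (Set.toFinite _)]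
  simp only [map_add, smul_add]
  abel

theorem eUp_zero (q μ : ℂ) (i : Idx l) (m1 n1 : ℤ) : eUp l q μ i m1 n1 0 = 0 := by
  simp [eUp]

noncomputable def eUpHom (l : ℕ) (q μ : ℂ) (i : Idx l) (m1 n1 : ℤ) : V l →+ V l :=
  AddMonoidHom.mk' (eUp l q μ i m1 n1) (eUp_add q μ i m1 n1)

theorem eUp_finsum {α : Type*} (q μ : ℂ) (i : Idx l) (m1 n1 : ℤ) (f : α → V l)
    (hf : (Function.support f).Finite) :
    eUp l q μ i m1 n1 (∑ᶠ x, f x) = ∑ᶠ x, eUp l q μ i m1 n1 (f x) := by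
  have h := AddMonoidHom.map_finsum (f := f) (eUpHom l q μ i m1 n1) hf
  simpa [eUpHom] using h

theorem eUp_sub (q μ : ℂ) (i : Idx l) (m1 n1 : ℤ) (p r : V l) :
    eUp l q μ i m1 n1 (p - r) = eUp l q μ i m1 n1 p - eUp l q μ i m1 n1 r :=
  AddMonoidHom.map_sub (eUpHom l q μ i m1 n1) p r

theorem eUp_smul (q μ : ℂ) (i : Idx l) (m1 n1 : ℤ) (c : ℂ) (p : V l) :
    eUp l q μ i m1 n1 (c • p) = c • eUp l q μ i m1 n1 p := by
  unfold eUp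
  have hsum : ∀ j : Idx l,
      (Function.support fun mm : (ℤ × ℤ) × ℤ × ℤ =>
        q ^ (n1 * mm.2.1 + mm.1.2 * m1 + mm.1.2 * mm.2.1) •
          (X (j, m1 + mm.1.1 + mm.2.1, n1 + mm.1.2 + mm.2.2) *
            pderiv (j, mm.1.1, mm.1.2) (pderiv (i, mm.2.1, mm.2.2) p))).Finite := by
    intro j
    exact fin_mm p i j (fun mm w => q ^ (n1 * mm.2.1 + mm.1.2 * m1 + mm.1.2 * mm.2.1) •
      (X (j, m1 + mm.1.1 + mm.2.1, n1 + mm.1.2 + mm.2.2) * w)) (by simp)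
  have h1 : ∀ j : Idx l,
      (∑ᶠ mm : (ℤ × ℤ) × ℤ × ℤ,
        q ^ (n1 * mm.2.1 + mm.1.2 * m1 + mm.1.2 * mm.2.1) •
          (X (j, m1 + mm.1.1 + mm.2.1, n1 + mm.1.2 + mm.2.2) *
            pderiv (j, mm.1.1, mm.1.2) (pderiv (i, mm.2.1, mm.2.2) (c • p))))
      = c • (∑ᶠ mm : (ℤ × ℤ) × ℤ × ℤ,
        q ^ (n1 * mm.2.1 + mm.1.2 * m1 + mm.1.2 * mm.2.1) •
          (X (j, m1 + mm.1.1 + mm.2.1, n1 + mm.1.2 + mm.2.2) *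
            pderiv (j, mm.1.1, mm.1.2) (pderiv (i, mm.2.1, mm.2.2) p))) := by
    intro j
    rw [smul_finsum' c (hsum j)]
    apply finsum_congr
    intro mm
    rw [Derivation.map_smul, Derivation.map_smul, mul_smul_comm,
      smul_comm (q ^ (n1 * mm.2.1 + mm.1.2 * m1 + mm.1.2 * mm.2.1)) c]
  rw [finsum_congr h1, ← smul_finsum' c (Set.toFinite _), Derivation.map_smul, smul_sub,
    smul_comm μ c, smul_comm (q ^ (-(m1 * n1))) c]
end Aux3

section Aux4
open MvPolynomial Function

variable {l : ℕ}

theorem finsum2_sub {K β M : Type*} [Finite K] [AddCommGroup M] (f g : K → β → M)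
    (hf : ∀ k, (Function.support (f k)).Finite) (hg : ∀ k, (Function.support (g k)).Finite) :
    ∑ᶠ (k : K), ∑ᶠ (b : β), (f k b - g k b)
      = (∑ᶠ (k : K), ∑ᶠ (b : β), f k b) - ∑ᶠ (k : K), ∑ᶠ (b : β), g k b := by
  rw [← finsum_sub_distrib (Set.toFinite _) (Set.toFinite _)]
  apply finsum_congr
  intro k
  exact finsum_sub_distrib (hf k) (hg k)

theorem finsum2_add {K β M : Type*} [Finite K] [AddCommGroup M] (f g : K → β → M)
    (hf : ∀ k, (Function.support (f k)).Finite) (hg : ∀ k, (Function.support (g k)).Finite) :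
    ∑ᶠ (k : K), ∑ᶠ (b : β), (f k b + g k b)
      = (∑ᶠ (k : K), ∑ᶠ (b : β), f k b) + ∑ᶠ (k : K), ∑ᶠ (b : β), g k b := by
  rw [← finsum_add_distrib (Set.toFinite _) (Set.toFinite _)]
  apply finsum_congr
  intro k
  exact finsum_add_distrib (hf k) (hg k)

/-- derivative of `eUp` in expanded form -/
theorem pd_eUp (q μ : ℂ) (i : Idx l) (m1 n1 : ℤ) (p : V l) (k : Idx l) (a : ℤ × ℤ) :
    pderiv (k, a.1, a.2) (eUp l q μ i m1 n1 p)
      = (q ^ (-(m1 * n1)) * μ) • pderiv (k, a.1, a.2) (pderiv (i, -m1, -n1) p)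
        - ∑ᶠ j : Idx l, ∑ᶠ mm : (ℤ × ℤ) × ℤ × ℤ,
            q ^ (n1 * mm.2.1 + mm.1.2 * m1 + mm.1.2 * mm.2.1) •
              ((if ((j, m1 + mm.1.1 + mm.2.1, n1 + mm.1.2 + mm.2.2) : Idx l × ℤ × ℤ)
                    = (k, a.1, a.2)
                  then pderiv (j, mm.1.1, mm.1.2) (pderiv (i, mm.2.1, mm.2.2) p) else 0)
                + X (j, m1 + mm.1.1 + mm.2.1, n1 + mm.1.2 + mm.2.2) *
                    pderiv (k, a.1, a.2)
                      (pderiv (j, mm.1.1, mm.1.2) (pderiv (i, mm.2.1, mm.2.2) p))) := by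
  unfold eUp
  rw [map_sub, Derivation.map_smul, Derivation.map_smul, smul_smul]
  congr 1
  rw [pd_finsum _ _ (Set.toFinite _)]
  apply finsum_congr
  intro j
  rw [pd_finsum _ _ (fin_mm p i j (fun mm w =>
    q ^ (n1 * mm.2.1 + mm.1.2 * m1 + mm.1.2 * mm.2.1) •
      (X (j, m1 + mm.1.1 + mm.2.1, n1 + mm.1.2 + mm.2.2) * w)) (by simp))]
  apply finsum_congr
  intro mm
  rw [Derivation.map_smul, pd_mul_X]

end Aux4

section Aux5
open MvPolynomial Function

variable {l : ℕ}

theorem finsum2_ne {α β M : Type*} [AddCommMonoid M] (f : α → β → M)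
    (h : (∑ᶠ a, ∑ᶠ b, f a b) ≠ 0) : ∃ a b, f a b ≠ 0 := by
  by_contra hc
  push_neg at hc
  exact h (finsum_eq_zero_of_forall_eq_zero fun a =>
    finsum_eq_zero_of_forall_eq_zero fun b => hc a b)


theorem finsum_split_add {β M : Type*} [AddCommMonoid M] (F A B : β → M)
    (h : ∀ b, F b = A b + B b) (hA : (Function.support A).Finite)
    (hB : (Function.support B).Finite) :
    ∑ᶠ b, F b = (∑ᶠ b, A b) + ∑ᶠ b, B b := by
  rw [finsum_congr h]
  exact finsum_add_distrib hA hB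

theorem split_sub_add {K β M : Type*} [Finite K] [AddCommGroup M] (F T1 T2 T3 : K → β → M)
    (h : ∀ k b, F k b = T1 k b - (T2 k b + T3 k b))
    (h1 : ∀ k, (Function.support (T1 k)).Finite)
    (h2 : ∀ k, (Function.support (T2 k)).Finite)
    (h3 : ∀ k, (Function.support (T3 k)).Finite) :
    ∑ᶠ k, ∑ᶠ b, F k b
      = ((∑ᶠ k, ∑ᶠ b, T1 k b) - ∑ᶠ k, ∑ᶠ b, T2 k b) - ∑ᶠ k, ∑ᶠ b, T3 k b := by
  rw [finsum_congr fun k => finsum_congr fun b => h k b]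
  rw [finsum2_sub _ _ h1 (fun k => ((h2 k).union (h3 k)).subset (Function.support_add _ _))]
  rw [finsum2_add _ _ h2 h3]
  abel

/-- support of the delta-part in `a` -/
theorem fin_if_a (q μ : ℂ) (i : Idx l) (m1 n1 m2 n2 : ℤ) (p : V l) (k : Idx l) :
    (Function.support fun a : ℤ × ℤ =>
      ∑ᶠ j : Idx l, ∑ᶠ mm : (ℤ × ℤ) × ℤ × ℤ,
        (q ^ (a.2 * m2) * q ^ (n1 * mm.2.1 + mm.1.2 * m1 + mm.1.2 * mm.2.1)) •
          (X (k, m2 + a.1, n2 + a.2) *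
            (if ((j, m1 + mm.1.1 + mm.2.1, n1 + mm.1.2 + mm.2.2) : Idx l × ℤ × ℤ)
                = (k, a.1, a.2)
              then pderiv (j, mm.1.1, mm.1.2) (pderiv (i, mm.2.1, mm.2.2) p) else 0))).Finite := by
  apply Set.Finite.subset (((S2_finite p).prod (S2_finite p)).image
    (fun mm : (ℤ × ℤ) × ℤ × ℤ => ((m1 + mm.1.1 + mm.2.1, n1 + mm.1.2 + mm.2.2) : ℤ × ℤ)))
  intro a ha
  obtain ⟨j, mm, hne⟩ := finsum2_ne _ ha
  by_cases hcond : ((j, m1 + mm.1.1 + mm.2.1, n1 + mm.1.2 + mm.2.2) : Idx l × ℤ × ℤ)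
      = (k, a.1, a.2)
  · have hP : pderiv (j, mm.1.1, mm.1.2) (pderiv (i, mm.2.1, mm.2.2) p) ≠ 0 := by
      intro h0
      rw [if_pos hcond, h0] at hne
      simp at hne
    have hP2 : pderiv (i, mm.2.1, mm.2.2) p ≠ 0 := by
      intro h0
      rw [h0] at hP
      simp at hP
    refine ⟨mm, ⟨S2_pd_subset _ (mem_S2 hP), mem_S2 hP2⟩, ?_⟩
    have h1 := congrArg (fun v : Idx l × ℤ × ℤ => v.2.1) hcond
    have h2 := congrArg (fun v : Idx l × ℤ × ℤ => v.2.2) hcond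
    simp only at h1 h2
    exact Prod.ext h1 h2
  · rw [if_neg hcond] at hne
    simp at hne

/-- support of the cubic part in `a` -/
theorem fin_cube_a (q μ : ℂ) (i : Idx l) (m1 n1 m2 n2 : ℤ) (p : V l) (k : Idx l) :
    (Function.support fun a : ℤ × ℤ =>
      ∑ᶠ j : Idx l, ∑ᶠ mm : (ℤ × ℤ) × ℤ × ℤ,
        (q ^ (a.2 * m2) * q ^ (n1 * mm.2.1 + mm.1.2 * m1 + mm.1.2 * mm.2.1)) •
          (X (k, m2 + a.1, n2 + a.2) *
            (X (j, m1 + mm.1.1 + mm.2.1, n1 + mm.1.2 + mm.2.2) *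
              pderiv (k, a.1, a.2)
                (pderiv (j, mm.1.1, mm.1.2) (pderiv (i, mm.2.1, mm.2.2) p))))).Finite := by
  apply (S2_finite p).subset
  intro a ha
  obtain ⟨j, mm, hne⟩ := finsum2_ne _ ha
  have hP : pderiv (k, a.1, a.2)
      (pderiv (j, mm.1.1, mm.1.2) (pderiv (i, mm.2.1, mm.2.2) p)) ≠ 0 := by
    intro h0
    rw [h0] at hne
    simp at hne
  have := mem_S2 hP
  have hsub : S2 (pderiv (j, mm.1.1, mm.1.2) (pderiv (i, mm.2.1, mm.2.2) p)) ⊆ S2 p :=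
    (S2_pd_subset _).trans (S2_pd_subset _)
  exact hsub this

theorem expandZ (q μ : ℂ) (i : Idx l) (m1 n1 m2 n2 : ℤ) (p : V l) :
    (∑ᶠ k : Idx l, ∑ᶠ a : ℤ × ℤ, q ^ (a.2 * m2) •
        (X (k, m2 + a.1, n2 + a.2) * pderiv (k, a.1, a.2) (eUp l q μ i m1 n1 p)))
    = (∑ᶠ k : Idx l, ∑ᶠ a : ℤ × ℤ,
        (q ^ (a.2 * m2) * (q ^ (-(m1 * n1)) * μ)) •
          (X (k, m2 + a.1, n2 + a.2) * pderiv (k, a.1, a.2) (pderiv (i, -m1, -n1) p)))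
      - (∑ᶠ k : Idx l, ∑ᶠ a : ℤ × ℤ, ∑ᶠ j : Idx l, ∑ᶠ mm : (ℤ × ℤ) × ℤ × ℤ,
          (q ^ (a.2 * m2) * q ^ (n1 * mm.2.1 + mm.1.2 * m1 + mm.1.2 * mm.2.1)) •
            (X (k, m2 + a.1, n2 + a.2) *
              (if ((j, m1 + mm.1.1 + mm.2.1, n1 + mm.1.2 + mm.2.2) : Idx l × ℤ × ℤ)
                  = (k, a.1, a.2)
                then pderiv (j, mm.1.1, mm.1.2) (pderiv (i, mm.2.1, mm.2.2) p) else 0)))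
      - (∑ᶠ k : Idx l, ∑ᶠ a : ℤ × ℤ, ∑ᶠ j : Idx l, ∑ᶠ mm : (ℤ × ℤ) × ℤ × ℤ,
          (q ^ (a.2 * m2) * q ^ (n1 * mm.2.1 + mm.1.2 * m1 + mm.1.2 * mm.2.1)) •
            (X (k, m2 + a.1, n2 + a.2) *
              (X (j, m1 + mm.1.1 + mm.2.1, n1 + mm.1.2 + mm.2.2) *
                pderiv (k, a.1, a.2)
                  (pderiv (j, mm.1.1, mm.1.2) (pderiv (i, mm.2.1, mm.2.2) p))))) := by
  have hpoint : ∀ (k : Idx l) (a : ℤ × ℤ),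
      q ^ (a.2 * m2) • (X (k, m2 + a.1, n2 + a.2) * pderiv (k, a.1, a.2) (eUp l q μ i m1 n1 p))
      = (q ^ (a.2 * m2) * (q ^ (-(m1 * n1)) * μ)) •
          (X (k, m2 + a.1, n2 + a.2) * pderiv (k, a.1, a.2) (pderiv (i, -m1, -n1) p))
        - ((∑ᶠ j : Idx l, ∑ᶠ mm : (ℤ × ℤ) × ℤ × ℤ,
            (q ^ (a.2 * m2) * q ^ (n1 * mm.2.1 + mm.1.2 * m1 + mm.1.2 * mm.2.1)) •
              (X (k, m2 + a.1, n2 + a.2) *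
                (if ((j, m1 + mm.1.1 + mm.2.1, n1 + mm.1.2 + mm.2.2) : Idx l × ℤ × ℤ)
                    = (k, a.1, a.2)
                  then pderiv (j, mm.1.1, mm.1.2) (pderiv (i, mm.2.1, mm.2.2) p) else 0)))
          + (∑ᶠ j : Idx l, ∑ᶠ mm : (ℤ × ℤ) × ℤ × ℤ,
            (q ^ (a.2 * m2) * q ^ (n1 * mm.2.1 + mm.1.2 * m1 + mm.1.2 * mm.2.1)) •
              (X (k, m2 + a.1, n2 + a.2) *
                (X (j, m1 + mm.1.1 + mm.2.1, n1 + mm.1.2 + mm.2.2) *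
                  pderiv (k, a.1, a.2)
                    (pderiv (j, mm.1.1, mm.1.2) (pderiv (i, mm.2.1, mm.2.2) p)))))) := by
    intro k a
    rw [pd_eUp, mul_sub, smul_sub]
    congr 1
    · rw [mul_smul_comm, smul_smul]
    · rw [mul_finsum' _ _ (Set.toFinite _), smul_finsum' _ (Set.toFinite _)]
      refine finsum_split_add _ _ _ (fun j => ?_) (Set.toFinite _) (Set.toFinite _)
      rw [mul_finsum' _ _ (fin_mm p i j (fun mm w =>
          q ^ (n1 * mm.2.1 + mm.1.2 * m1 + mm.1.2 * mm.2.1) •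
            ((if ((j, m1 + mm.1.1 + mm.2.1, n1 + mm.1.2 + mm.2.2) : Idx l × ℤ × ℤ)
                = (k, a.1, a.2) then w else 0)
              + X (j, m1 + mm.1.1 + mm.2.1, n1 + mm.1.2 + mm.2.2) *
                  pderiv (k, a.1, a.2) w)) (by simp)),
        smul_finsum' _ (fin_mm p i j (fun mm w =>
          X (k, m2 + a.1, n2 + a.2) *
            (q ^ (n1 * mm.2.1 + mm.1.2 * m1 + mm.1.2 * mm.2.1) •
            ((if ((j, m1 + mm.1.1 + mm.2.1, n1 + mm.1.2 + mm.2.2) : Idx l × ℤ × ℤ)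
                = (k, a.1, a.2) then w else 0)
              + X (j, m1 + mm.1.1 + mm.2.1, n1 + mm.1.2 + mm.2.2) *
                  pderiv (k, a.1, a.2) w))) (by simp))]
      refine finsum_split_add _ _ _ (fun mm => ?_)
        (fin_mm p i j (fun mm w =>
          (q ^ (a.2 * m2) * q ^ (n1 * mm.2.1 + mm.1.2 * m1 + mm.1.2 * mm.2.1)) •
            (X (k, m2 + a.1, n2 + a.2) *
              (if ((j, m1 + mm.1.1 + mm.2.1, n1 + mm.1.2 + mm.2.2) : Idx l × ℤ × ℤ)
                  = (k, a.1, a.2) then w else 0))) (by simp))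
        (fin_mm p i j (fun mm w =>
          (q ^ (a.2 * m2) * q ^ (n1 * mm.2.1 + mm.1.2 * m1 + mm.1.2 * mm.2.1)) •
            (X (k, m2 + a.1, n2 + a.2) *
              (X (j, m1 + mm.1.1 + mm.2.1, n1 + mm.1.2 + mm.2.2) *
                pderiv (k, a.1, a.2) w))) (by simp))
      beta_reduce
      rw [mul_smul_comm, smul_smul, mul_add, smul_add]
  exact split_sub_add _ _ _ _ hpoint
    (fun k => fin_a (pderiv (i, -m1, -n1) p) k (fun a w =>
      (q ^ (a.2 * m2) * (q ^ (-(m1 * n1)) * μ)) • (X (k, m2 + a.1, n2 + a.2) * w)) (by simp))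
    (fun k => fin_if_a q μ i m1 n1 m2 n2 p k)
    (fun k => fin_cube_a q μ i m1 n1 m2 n2 p k)
end Aux5

section Aux6
open MvPolynomial Function

variable {l : ℕ}

theorem collapseZif (q μ : ℂ) (i : Idx l) (m1 n1 m2 n2 : ℤ) (p : V l) :
    (∑ᶠ k : Idx l, ∑ᶠ a : ℤ × ℤ, ∑ᶠ j : Idx l, ∑ᶠ mm : (ℤ × ℤ) × ℤ × ℤ,
      (q ^ (a.2 * m2) * q ^ (n1 * mm.2.1 + mm.1.2 * m1 + mm.1.2 * mm.2.1)) •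
        (X (k, m2 + a.1, n2 + a.2) *
          (if ((j, m1 + mm.1.1 + mm.2.1, n1 + mm.1.2 + mm.2.2) : Idx l × ℤ × ℤ)
              = (k, a.1, a.2)
            then pderiv (j, mm.1.1, mm.1.2) (pderiv (i, mm.2.1, mm.2.2) p) else 0)))
    = ∑ᶠ j : Idx l, ∑ᶠ mm : (ℤ × ℤ) × ℤ × ℤ,
        (q ^ ((n1 + mm.1.2 + mm.2.2) * m2) * q ^ (n1 * mm.2.1 + mm.1.2 * m1 + mm.1.2 * mm.2.1)) •
          (X (j, m2 + (m1 + mm.1.1 + mm.2.1), n2 + (n1 + mm.1.2 + mm.2.2)) *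
            pderiv (j, mm.1.1, mm.1.2) (pderiv (i, mm.2.1, mm.2.2) p)) := by
  refine (finsum_swap4 (M := V l) (fun (k : Idx l) (a : ℤ × ℤ) (j : Idx l) (mm : (ℤ × ℤ) × ℤ × ℤ) =>
      (q ^ (a.2 * m2) * q ^ (n1 * mm.2.1 + mm.1.2 * m1 + mm.1.2 * mm.2.1)) •
        (X (k, m2 + a.1, n2 + a.2) *
          (if ((j, m1 + mm.1.1 + mm.2.1, n1 + mm.1.2 + mm.2.2) : Idx l × ℤ × ℤ)
              = (k, a.1, a.2)
            then pderiv (j, mm.1.1, mm.1.2) (pderiv (i, mm.2.1, mm.2.2) p) else 0))) ?_).trans ?_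
  · apply Set.Finite.subset
      ((Set.finite_univ.prod (((S2_finite p).prod (S2_finite p)).image
        (fun mm : (ℤ × ℤ) × ℤ × ℤ =>
          ((m1 + mm.1.1 + mm.2.1, n1 + mm.1.2 + mm.2.2) : ℤ × ℤ)))).prod
        (Set.finite_univ.prod ((S2_finite p).prod (S2_finite p))))
    rintro ⟨⟨k, a⟩, j, mm⟩ hx
    simp only [Function.mem_support] at hx
    by_cases hcond : ((j, m1 + mm.1.1 + mm.2.1, n1 + mm.1.2 + mm.2.2) : Idx l × ℤ × ℤ)
        = (k, a.1, a.2)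
    · have hP : pderiv (j, mm.1.1, mm.1.2) (pderiv (i, mm.2.1, mm.2.2) p) ≠ 0 := by
        intro h0
        rw [if_pos hcond, h0] at hx
        simp at hx
      have hP2 : pderiv (i, mm.2.1, mm.2.2) p ≠ 0 := by
        intro h0
        rw [h0] at hP
        simp at hP
      have hmm : mm ∈ (S2 p) ×ˢ (S2 p) := ⟨S2_pd_subset _ (mem_S2 hP), mem_S2 hP2⟩
      refine ⟨⟨Set.mem_univ _, ⟨mm, hmm, ?_⟩⟩, Set.mem_univ _, hmm⟩
      have h1 := congrArg (fun v : Idx l × ℤ × ℤ => v.2.1) hcond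
      have h2 := congrArg (fun v : Idx l × ℤ × ℤ => v.2.2) hcond
      simp only at h1 h2
      exact Prod.ext h1 h2
    · rw [if_neg hcond] at hx
      simp at hx
  · apply finsum_congr; intro j
    apply finsum_congr; intro mm
    rw [finsum_congr (fun k => finsum_eq_single _
        ((m1 + mm.1.1 + mm.2.1, n1 + mm.1.2 + mm.2.2) : ℤ × ℤ) (fun a ha => ?_))]
    rotate_left
    · rw [if_neg, mul_zero, smul_zero]
      intro hc
      apply ha
      have h1 := congrArg (fun v : Idx l × ℤ × ℤ => v.2.1) hc
      have h2 := congrArg (fun v : Idx l × ℤ × ℤ => v.2.2) hc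
      simp only at h1 h2
      exact Prod.ext h1.symm h2.symm
    rw [finsum_eq_single _ j (fun k hk => ?_)]
    rotate_left
    · rw [if_neg, mul_zero, smul_zero]
      intro hc
      apply hk
      have h1 := congrArg (fun v : Idx l × ℤ × ℤ => v.1) hc
      simp only at h1
      exact h1.symm
    rw [if_pos rfl]
end Aux6

section Aux7
open MvPolynomial Function

variable {l : ℕ}

theorem fin_ifi (r : V l) (i j : Idx l) (u : Idx l × ℤ × ℤ)
    (F : (ℤ × ℤ) × ℤ × ℤ → V l → V l) (hF : ∀ mm, F mm 0 = 0) :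
    (Function.support fun mm : (ℤ × ℤ) × ℤ × ℤ =>
      F mm (if u = ((i, mm.2.1, mm.2.2) : Idx l × ℤ × ℤ)
        then pderiv (j, mm.1.1, mm.1.2) r else 0)).Finite := by
  apply ((S2_finite r).prod (Set.finite_singleton (u.2.1, u.2.2))).subset
  intro mm hmm
  simp only [Function.mem_support] at hmm
  by_cases hcond : u = ((i, mm.2.1, mm.2.2) : Idx l × ℤ × ℤ)
  · have hP : pderiv (j, mm.1.1, mm.1.2) r ≠ 0 := by
      intro h0
      rw [if_pos hcond, h0] at hmm
      exact hmm (hF mm)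
    refine ⟨mem_S2 hP, ?_⟩
    have h1 := congrArg (fun v : Idx l × ℤ × ℤ => v.2.1) hcond
    have h2 := congrArg (fun v : Idx l × ℤ × ℤ => v.2.2) hcond
    simp only at h1 h2
    simp only [Set.mem_singleton_iff]
    exact Prod.ext h1.symm h2.symm
  · rw [if_neg hcond] at hmm
    exact absurd (hF mm) hmm

theorem fin_ifj (r : V l) (i j : Idx l) (u : Idx l × ℤ × ℤ)
    (F : (ℤ × ℤ) × ℤ × ℤ → V l → V l) (hF : ∀ mm, F mm 0 = 0) :
    (Function.support fun mm : (ℤ × ℤ) × ℤ × ℤ =>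
      F mm (if u = ((j, mm.1.1, mm.1.2) : Idx l × ℤ × ℤ)
        then pderiv (i, mm.2.1, mm.2.2) r else 0)).Finite := by
  apply ((Set.finite_singleton (u.2.1, u.2.2)).prod (S2_finite r)).subset
  intro mm hmm
  simp only [Function.mem_support] at hmm
  by_cases hcond : u = ((j, mm.1.1, mm.1.2) : Idx l × ℤ × ℤ)
  · have hP : pderiv (i, mm.2.1, mm.2.2) r ≠ 0 := by
      intro h0
      rw [if_pos hcond, h0] at hmm
      exact hmm (hF mm)
    refine ⟨?_, mem_S2 hP⟩
    have h1 := congrArg (fun v : Idx l × ℤ × ℤ => v.2.1) hcond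
    have h2 := congrArg (fun v : Idx l × ℤ × ℤ => v.2.2) hcond
    simp only at h1 h2
    simp only [Set.mem_singleton_iff]
    exact Prod.ext h1.symm h2.symm
  · rw [if_neg hcond] at hmm
    exact absurd (hF mm) hmm

theorem split3_add {K β M : Type*} [Finite K] [AddCommGroup M] (F A B C : K → β → M)
    (h : ∀ k b, F k b = A k b + (B k b + C k b))
    (hA : ∀ k, (Function.support (A k)).Finite)
    (hB : ∀ k, (Function.support (B k)).Finite)
    (hC : ∀ k, (Function.support (C k)).Finite) :
    ∑ᶠ k, ∑ᶠ b, F k b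
      = ((∑ᶠ k, ∑ᶠ b, A k b) + ∑ᶠ k, ∑ᶠ b, B k b) + ∑ᶠ k, ∑ᶠ b, C k b := by
  rw [finsum_congr fun k => finsum_congr fun b => h k b]
  have h123 := finsum2_add A (fun k b => B k b + C k b) hA
    (fun k => ((hB k).union (hC k)).subset (by
      intro b hb
      simp only [Function.mem_support] at hb
      by_contra hc
      simp only [Set.mem_union, Function.mem_support, not_or, not_not] at hc
      exact hb (by rw [hc.1, hc.2, add_zero])))
  have h23 := finsum2_add B C hB hC
  rw [h123, h23, add_assoc]

theorem eUp_mulX (q μ : ℂ) (i : Idx l) (m1 n1 : ℤ) (u : Idx l × ℤ × ℤ) (r : V l) :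
    eUp l q μ i m1 n1 (X u * r)
      = (q ^ (-(m1 * n1)) * μ) • (if u = ((i, -m1, -n1) : Idx l × ℤ × ℤ) then r else 0)
        + (q ^ (-(m1 * n1)) * μ) • (X u * pderiv (i, -m1, -n1) r)
        - (∑ᶠ j : Idx l, ∑ᶠ mm : (ℤ × ℤ) × ℤ × ℤ,
            q ^ (n1 * mm.2.1 + mm.1.2 * m1 + mm.1.2 * mm.2.1) •
              (X (j, m1 + mm.1.1 + mm.2.1, n1 + mm.1.2 + mm.2.2) *
                (if u = ((i, mm.2.1, mm.2.2) : Idx l × ℤ × ℤ)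
                  then pderiv (j, mm.1.1, mm.1.2) r else 0)))
        - (∑ᶠ j : Idx l, ∑ᶠ mm : (ℤ × ℤ) × ℤ × ℤ,
            q ^ (n1 * mm.2.1 + mm.1.2 * m1 + mm.1.2 * mm.2.1) •
              (X (j, m1 + mm.1.1 + mm.2.1, n1 + mm.1.2 + mm.2.2) *
                (if u = ((j, mm.1.1, mm.1.2) : Idx l × ℤ × ℤ)
                  then pderiv (i, mm.2.1, mm.2.2) r else 0)))
        - (∑ᶠ j : Idx l, ∑ᶠ mm : (ℤ × ℤ) × ℤ × ℤ,
            q ^ (n1 * mm.2.1 + mm.1.2 * m1 + mm.1.2 * mm.2.1) •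
              (X (j, m1 + mm.1.1 + mm.2.1, n1 + mm.1.2 + mm.2.2) *
                (X u * pderiv (j, mm.1.1, mm.1.2) (pderiv (i, mm.2.1, mm.2.2) r)))) := by
  unfold eUp
  rw [pd_mul_X]
  have hsplit : (∑ᶠ j : Idx l, ∑ᶠ mm : (ℤ × ℤ) × ℤ × ℤ,
      q ^ (n1 * mm.2.1 + mm.1.2 * m1 + mm.1.2 * mm.2.1) •
        (X (j, m1 + mm.1.1 + mm.2.1, n1 + mm.1.2 + mm.2.2) *
          pderiv (j, mm.1.1, mm.1.2) (pderiv (i, mm.2.1, mm.2.2) (X u * r))))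
      = ((∑ᶠ j : Idx l, ∑ᶠ mm : (ℤ × ℤ) × ℤ × ℤ,
          q ^ (n1 * mm.2.1 + mm.1.2 * m1 + mm.1.2 * mm.2.1) •
            (X (j, m1 + mm.1.1 + mm.2.1, n1 + mm.1.2 + mm.2.2) *
              (if u = ((i, mm.2.1, mm.2.2) : Idx l × ℤ × ℤ)
                then pderiv (j, mm.1.1, mm.1.2) r else 0)))
        + ∑ᶠ j : Idx l, ∑ᶠ mm : (ℤ × ℤ) × ℤ × ℤ,
          q ^ (n1 * mm.2.1 + mm.1.2 * m1 + mm.1.2 * mm.2.1) •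
            (X (j, m1 + mm.1.1 + mm.2.1, n1 + mm.1.2 + mm.2.2) *
              (if u = ((j, mm.1.1, mm.1.2) : Idx l × ℤ × ℤ)
                then pderiv (i, mm.2.1, mm.2.2) r else 0)))
        + ∑ᶠ j : Idx l, ∑ᶠ mm : (ℤ × ℤ) × ℤ × ℤ,
          q ^ (n1 * mm.2.1 + mm.1.2 * m1 + mm.1.2 * mm.2.1) •
            (X (j, m1 + mm.1.1 + mm.2.1, n1 + mm.1.2 + mm.2.2) *
              (X u * pderiv (j, mm.1.1, mm.1.2) (pderiv (i, mm.2.1, mm.2.2) r))) := by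
    refine split3_add _ _ _ _ (fun j mm => ?_)
      (fun j => fin_ifi r i j u (fun mm w =>
        q ^ (n1 * mm.2.1 + mm.1.2 * m1 + mm.1.2 * mm.2.1) •
          (X (j, m1 + mm.1.1 + mm.2.1, n1 + mm.1.2 + mm.2.2) * w)) (by simp))
      (fun j => fin_ifj r i j u (fun mm w =>
        q ^ (n1 * mm.2.1 + mm.1.2 * m1 + mm.1.2 * mm.2.1) •
          (X (j, m1 + mm.1.1 + mm.2.1, n1 + mm.1.2 + mm.2.2) * w)) (by simp))
      (fun j => fin_mm r i j (fun mm w =>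
        q ^ (n1 * mm.2.1 + mm.1.2 * m1 + mm.1.2 * mm.2.1) •
          (X (j, m1 + mm.1.1 + mm.2.1, n1 + mm.1.2 + mm.2.2) * (X u * w))) (by simp))
    rw [pd_mul_X, map_add, pd_ite, pd_mul_X, mul_add, smul_add, mul_add, smul_add]
  rw [hsplit, smul_add, smul_add, smul_smul, smul_smul]
  abel
end Aux7

section Aux8
open MvPolynomial Function

variable {l : ℕ}

theorem split5 {K β M : Type*} [Finite K] [AddCommGroup M] (F T1 T2 T3 T4 T5 : K → β → M)
    (h : ∀ k b, F k b = T1 k b + T2 k b - T3 k b - T4 k b - T5 k b)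
    (h1 : ∀ k, (Function.support (T1 k)).Finite)
    (h2 : ∀ k, (Function.support (T2 k)).Finite)
    (h3 : ∀ k, (Function.support (T3 k)).Finite)
    (h4 : ∀ k, (Function.support (T4 k)).Finite)
    (h5 : ∀ k, (Function.support (T5 k)).Finite) :
    ∑ᶠ k, ∑ᶠ b, F k b
      = (∑ᶠ k, ∑ᶠ b, T1 k b) + (∑ᶠ k, ∑ᶠ b, T2 k b) - (∑ᶠ k, ∑ᶠ b, T3 k b)
        - (∑ᶠ k, ∑ᶠ b, T4 k b) - (∑ᶠ k, ∑ᶠ b, T5 k b) := by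
  have e1 : ∀ k b, F k b = (T1 k b + T2 k b) - (T3 k b + T4 k b + T5 k b) := by
    intro k b
    rw [h]
    abel
  rw [finsum_congr fun k => finsum_congr fun b => e1 k b]
  have hsub := finsum2_sub (fun k b => T1 k b + T2 k b)
    (fun k b => T3 k b + T4 k b + T5 k b)
    (fun k => ((h1 k).union (h2 k)).subset (by
      intro b hb
      simp only [Function.mem_support] at hb
      by_contra hc
      simp only [Set.mem_union, Function.mem_support, not_or, not_not] at hc
      exact hb (by rw [hc.1, hc.2, add_zero])))
    (fun k => (((h3 k).union (h4 k)).union (h5 k)).subset (by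
      intro b hb
      simp only [Function.mem_support] at hb
      by_contra hc
      simp only [Set.mem_union, Function.mem_support, not_or, not_not] at hc
      exact hb (by rw [hc.1.1, hc.1.2, hc.2, add_zero, add_zero])))
  rw [hsub]
  have h12 := finsum2_add T1 T2 h1 h2
  have h345 := finsum2_add (fun k b => T3 k b + T4 k b) T5
    (fun k => ((h3 k).union (h4 k)).subset (by
      intro b hb
      simp only [Function.mem_support] at hb
      by_contra hc
      simp only [Set.mem_union, Function.mem_support, not_or, not_not] at hc
      exact hb (by rw [hc.1, hc.2, add_zero])))
    h5
  have h34 := finsum2_add T3 T4 h3 h4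
  rw [h12, h345, h34]
  abel

theorem expandW (q μ : ℂ) (i : Idx l) (m1 n1 m2 n2 : ℤ) (p : V l) :
    eUp l q μ i m1 n1 (∑ᶠ k : Idx l, ∑ᶠ a : ℤ × ℤ, q ^ (a.2 * m2) •
        (X (k, m2 + a.1, n2 + a.2) * pderiv (k, a.1, a.2) p))
    = (∑ᶠ k : Idx l, ∑ᶠ a : ℤ × ℤ,
        (q ^ (a.2 * m2) * (q ^ (-(m1 * n1)) * μ)) •
          (if ((k, m2 + a.1, n2 + a.2) : Idx l × ℤ × ℤ) = ((i, -m1, -n1) : Idx l × ℤ × ℤ)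
            then pderiv (k, a.1, a.2) p else 0))
      + (∑ᶠ k : Idx l, ∑ᶠ a : ℤ × ℤ,
        (q ^ (a.2 * m2) * (q ^ (-(m1 * n1)) * μ)) •
          (X (k, m2 + a.1, n2 + a.2) * pderiv (i, -m1, -n1) (pderiv (k, a.1, a.2) p)))
      - (∑ᶠ k : Idx l, ∑ᶠ a : ℤ × ℤ, ∑ᶠ j : Idx l, ∑ᶠ mm : (ℤ × ℤ) × ℤ × ℤ,
        (q ^ (a.2 * m2) * q ^ (n1 * mm.2.1 + mm.1.2 * m1 + mm.1.2 * mm.2.1)) •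
          (X (j, m1 + mm.1.1 + mm.2.1, n1 + mm.1.2 + mm.2.2) *
            (if ((k, m2 + a.1, n2 + a.2) : Idx l × ℤ × ℤ) = ((i, mm.2.1, mm.2.2) : Idx l × ℤ × ℤ)
              then pderiv (j, mm.1.1, mm.1.2) (pderiv (k, a.1, a.2) p) else 0)))
      - (∑ᶠ k : Idx l, ∑ᶠ a : ℤ × ℤ, ∑ᶠ j : Idx l, ∑ᶠ mm : (ℤ × ℤ) × ℤ × ℤ,
        (q ^ (a.2 * m2) * q ^ (n1 * mm.2.1 + mm.1.2 * m1 + mm.1.2 * mm.2.1)) •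
          (X (j, m1 + mm.1.1 + mm.2.1, n1 + mm.1.2 + mm.2.2) *
            (if ((k, m2 + a.1, n2 + a.2) : Idx l × ℤ × ℤ) = ((j, mm.1.1, mm.1.2) : Idx l × ℤ × ℤ)
              then pderiv (i, mm.2.1, mm.2.2) (pderiv (k, a.1, a.2) p) else 0)))
      - (∑ᶠ k : Idx l, ∑ᶠ a : ℤ × ℤ, ∑ᶠ j : Idx l, ∑ᶠ mm : (ℤ × ℤ) × ℤ × ℤ,
        (q ^ (a.2 * m2) * q ^ (n1 * mm.2.1 + mm.1.2 * m1 + mm.1.2 * mm.2.1)) •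
          (X (j, m1 + mm.1.1 + mm.2.1, n1 + mm.1.2 + mm.2.2) *
            (X (k, m2 + a.1, n2 + a.2) *
              pderiv (j, mm.1.1, mm.1.2)
                (pderiv (i, mm.2.1, mm.2.2) (pderiv (k, a.1, a.2) p))))) := by
  rw [eUp_finsum q μ i m1 n1 _ (Set.toFinite _)]
  rw [finsum_congr (fun k => eUp_finsum q μ i m1 n1 _
    (fin_a p k (fun a w => q ^ (a.2 * m2) • (X (k, m2 + a.1, n2 + a.2) * w)) (by simp)))]
  have hterm : ∀ (k : Idx l) (a : ℤ × ℤ),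
      eUp l q μ i m1 n1 (q ^ (a.2 * m2) • (X (k, m2 + a.1, n2 + a.2) * pderiv (k, a.1, a.2) p))
      = (q ^ (a.2 * m2) * (q ^ (-(m1 * n1)) * μ)) •
          (if ((k, m2 + a.1, n2 + a.2) : Idx l × ℤ × ℤ) = ((i, -m1, -n1) : Idx l × ℤ × ℤ)
            then pderiv (k, a.1, a.2) p else 0)
        + (q ^ (a.2 * m2) * (q ^ (-(m1 * n1)) * μ)) •
          (X (k, m2 + a.1, n2 + a.2) * pderiv (i, -m1, -n1) (pderiv (k, a.1, a.2) p))
        - (∑ᶠ j : Idx l, ∑ᶠ mm : (ℤ × ℤ) × ℤ × ℤ,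
          (q ^ (a.2 * m2) * q ^ (n1 * mm.2.1 + mm.1.2 * m1 + mm.1.2 * mm.2.1)) •
            (X (j, m1 + mm.1.1 + mm.2.1, n1 + mm.1.2 + mm.2.2) *
              (if ((k, m2 + a.1, n2 + a.2) : Idx l × ℤ × ℤ)
                  = ((i, mm.2.1, mm.2.2) : Idx l × ℤ × ℤ)
                then pderiv (j, mm.1.1, mm.1.2) (pderiv (k, a.1, a.2) p) else 0)))
        - (∑ᶠ j : Idx l, ∑ᶠ mm : (ℤ × ℤ) × ℤ × ℤ,
          (q ^ (a.2 * m2) * q ^ (n1 * mm.2.1 + mm.1.2 * m1 + mm.1.2 * mm.2.1)) •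
            (X (j, m1 + mm.1.1 + mm.2.1, n1 + mm.1.2 + mm.2.2) *
              (if ((k, m2 + a.1, n2 + a.2) : Idx l × ℤ × ℤ)
                  = ((j, mm.1.1, mm.1.2) : Idx l × ℤ × ℤ)
                then pderiv (i, mm.2.1, mm.2.2) (pderiv (k, a.1, a.2) p) else 0)))
        - (∑ᶠ j : Idx l, ∑ᶠ mm : (ℤ × ℤ) × ℤ × ℤ,
          (q ^ (a.2 * m2) * q ^ (n1 * mm.2.1 + mm.1.2 * m1 + mm.1.2 * mm.2.1)) •
            (X (j, m1 + mm.1.1 + mm.2.1, n1 + mm.1.2 + mm.2.2) *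
              (X (k, m2 + a.1, n2 + a.2) *
                pderiv (j, mm.1.1, mm.1.2)
                  (pderiv (i, mm.2.1, mm.2.2) (pderiv (k, a.1, a.2) p))))) := by
    intro k a
    rw [eUp_smul, eUp_mulX]
    have hS3 : q ^ (a.2 * m2) • (∑ᶠ j : Idx l, ∑ᶠ mm : (ℤ × ℤ) × ℤ × ℤ,
        q ^ (n1 * mm.2.1 + mm.1.2 * m1 + mm.1.2 * mm.2.1) •
          (X (j, m1 + mm.1.1 + mm.2.1, n1 + mm.1.2 + mm.2.2) *
            (if ((k, m2 + a.1, n2 + a.2) : Idx l × ℤ × ℤ)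
                = ((i, mm.2.1, mm.2.2) : Idx l × ℤ × ℤ)
              then pderiv (j, mm.1.1, mm.1.2) (pderiv (k, a.1, a.2) p) else 0)))
        = ∑ᶠ j : Idx l, ∑ᶠ mm : (ℤ × ℤ) × ℤ × ℤ,
          (q ^ (a.2 * m2) * q ^ (n1 * mm.2.1 + mm.1.2 * m1 + mm.1.2 * mm.2.1)) •
            (X (j, m1 + mm.1.1 + mm.2.1, n1 + mm.1.2 + mm.2.2) *
              (if ((k, m2 + a.1, n2 + a.2) : Idx l × ℤ × ℤ)
                  = ((i, mm.2.1, mm.2.2) : Idx l × ℤ × ℤ)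
                then pderiv (j, mm.1.1, mm.1.2) (pderiv (k, a.1, a.2) p) else 0)) := by
      rw [smul_finsum' _ (Set.toFinite _)]
      refine finsum_congr fun j => ?_
      rw [smul_finsum' _ (fin_ifi (pderiv (k, a.1, a.2) p) i j ((k, m2 + a.1, n2 + a.2))
        (fun mm w => q ^ (n1 * mm.2.1 + mm.1.2 * m1 + mm.1.2 * mm.2.1) •
          (X (j, m1 + mm.1.1 + mm.2.1, n1 + mm.1.2 + mm.2.2) * w)) (by simp))]
      exact finsum_congr fun mm => smul_smul _ _ _
    have hS4 : q ^ (a.2 * m2) • (∑ᶠ j : Idx l, ∑ᶠ mm : (ℤ × ℤ) × ℤ × ℤ,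
        q ^ (n1 * mm.2.1 + mm.1.2 * m1 + mm.1.2 * mm.2.1) •
          (X (j, m1 + mm.1.1 + mm.2.1, n1 + mm.1.2 + mm.2.2) *
            (if ((k, m2 + a.1, n2 + a.2) : Idx l × ℤ × ℤ)
                = ((j, mm.1.1, mm.1.2) : Idx l × ℤ × ℤ)
              then pderiv (i, mm.2.1, mm.2.2) (pderiv (k, a.1, a.2) p) else 0)))
        = ∑ᶠ j : Idx l, ∑ᶠ mm : (ℤ × ℤ) × ℤ × ℤ,
          (q ^ (a.2 * m2) * q ^ (n1 * mm.2.1 + mm.1.2 * m1 + mm.1.2 * mm.2.1)) •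
            (X (j, m1 + mm.1.1 + mm.2.1, n1 + mm.1.2 + mm.2.2) *
              (if ((k, m2 + a.1, n2 + a.2) : Idx l × ℤ × ℤ)
                  = ((j, mm.1.1, mm.1.2) : Idx l × ℤ × ℤ)
                then pderiv (i, mm.2.1, mm.2.2) (pderiv (k, a.1, a.2) p) else 0)) := by
      rw [smul_finsum' _ (Set.toFinite _)]
      refine finsum_congr fun j => ?_
      rw [smul_finsum' _ (fin_ifj (pderiv (k, a.1, a.2) p) i j ((k, m2 + a.1, n2 + a.2))
        (fun mm w => q ^ (n1 * mm.2.1 + mm.1.2 * m1 + mm.1.2 * mm.2.1) •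
          (X (j, m1 + mm.1.1 + mm.2.1, n1 + mm.1.2 + mm.2.2) * w)) (by simp))]
      exact finsum_congr fun mm => smul_smul _ _ _
    have hS5 : q ^ (a.2 * m2) • (∑ᶠ j : Idx l, ∑ᶠ mm : (ℤ × ℤ) × ℤ × ℤ,
        q ^ (n1 * mm.2.1 + mm.1.2 * m1 + mm.1.2 * mm.2.1) •
          (X (j, m1 + mm.1.1 + mm.2.1, n1 + mm.1.2 + mm.2.2) *
            (X (k, m2 + a.1, n2 + a.2) *
              pderiv (j, mm.1.1, mm.1.2)
                (pderiv (i, mm.2.1, mm.2.2) (pderiv (k, a.1, a.2) p)))))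
        = ∑ᶠ j : Idx l, ∑ᶠ mm : (ℤ × ℤ) × ℤ × ℤ,
          (q ^ (a.2 * m2) * q ^ (n1 * mm.2.1 + mm.1.2 * m1 + mm.1.2 * mm.2.1)) •
            (X (j, m1 + mm.1.1 + mm.2.1, n1 + mm.1.2 + mm.2.2) *
              (X (k, m2 + a.1, n2 + a.2) *
                pderiv (j, mm.1.1, mm.1.2)
                  (pderiv (i, mm.2.1, mm.2.2) (pderiv (k, a.1, a.2) p)))) := by
      rw [smul_finsum' _ (Set.toFinite _)]
      refine finsum_congr fun j => ?_
      rw [smul_finsum' _ (fin_mm (pderiv (k, a.1, a.2) p) i j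
        (fun mm w => q ^ (n1 * mm.2.1 + mm.1.2 * m1 + mm.1.2 * mm.2.1) •
          (X (j, m1 + mm.1.1 + mm.2.1, n1 + mm.1.2 + mm.2.2) *
            (X (k, m2 + a.1, n2 + a.2) * w))) (by simp))]
      exact finsum_congr fun mm => smul_smul _ _ _
    rw [smul_sub, smul_sub, smul_sub, smul_add, hS3, hS4, hS5, smul_smul, smul_smul]
  rw [finsum_congr (fun k => finsum_congr (fun a => hterm k a))]
  refine split5 _ _ _ _ _ _ (fun k a => rfl)
    (fun k => fin_a p k (fun a w =>
      (q ^ (a.2 * m2) * (q ^ (-(m1 * n1)) * μ)) •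
        (if ((k, m2 + a.1, n2 + a.2) : Idx l × ℤ × ℤ) = ((i, -m1, -n1) : Idx l × ℤ × ℤ)
          then w else 0)) (by simp))
    (fun k => fin_a p k (fun a w =>
      (q ^ (a.2 * m2) * (q ^ (-(m1 * n1)) * μ)) •
        (X (k, m2 + a.1, n2 + a.2) * pderiv (i, -m1, -n1) w)) (by simp))
    (fun k => ?_) (fun k => ?_) (fun k => ?_)
  · apply (S2_finite p).subset
    intro a ha
    obtain ⟨j, mm, hne⟩ := finsum2_ne _ ha
    by_cases hcond : ((k, m2 + a.1, n2 + a.2) : Idx l × ℤ × ℤ)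
        = ((i, mm.2.1, mm.2.2) : Idx l × ℤ × ℤ)
    · have hP : pderiv (k, a.1, a.2) p ≠ 0 := by
        intro h0
        rw [if_pos hcond, h0] at hne
        simp at hne
      exact mem_S2 hP
    · rw [if_neg hcond] at hne
      simp at hne
  · apply (S2_finite p).subset
    intro a ha
    obtain ⟨j, mm, hne⟩ := finsum2_ne _ ha
    by_cases hcond : ((k, m2 + a.1, n2 + a.2) : Idx l × ℤ × ℤ)
        = ((j, mm.1.1, mm.1.2) : Idx l × ℤ × ℤ)
    · have hP : pderiv (k, a.1, a.2) p ≠ 0 := by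
        intro h0
        rw [if_pos hcond, h0] at hne
        simp at hne
      exact mem_S2 hP
    · rw [if_neg hcond] at hne
      simp at hne
  · apply (S2_finite p).subset
    intro a ha
    obtain ⟨j, mm, hne⟩ := finsum2_ne _ ha
    have hP : pderiv (k, a.1, a.2) p ≠ 0 := by
      intro h0
      rw [h0] at hne
      simp at hne
    exact mem_S2 hP
end Aux8

section Aux9
open MvPolynomial Function

variable {l : ℕ}

theorem collapseW1 (q μ : ℂ) (i : Idx l) (m1 n1 m2 n2 : ℤ) (p : V l) :
    (∑ᶠ k : Idx l, ∑ᶠ a : ℤ × ℤ,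
      (q ^ (a.2 * m2) * (q ^ (-(m1 * n1)) * μ)) •
        (if ((k, m2 + a.1, n2 + a.2) : Idx l × ℤ × ℤ) = ((i, -m1, -n1) : Idx l × ℤ × ℤ)
          then pderiv (k, a.1, a.2) p else 0))
    = (q ^ ((-n1 - n2) * m2) * (q ^ (-(m1 * n1)) * μ)) •
        pderiv (i, -m1 - m2, -n1 - n2) p := by
  rw [finsum_congr (fun k => finsum_eq_single _ ((-m1 - m2, -n1 - n2) : ℤ × ℤ)
    (fun a ha => ?_))]
  rotate_left
  · rw [if_neg, smul_zero]
    intro hc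
    apply ha
    have h1 := congrArg (fun v : Idx l × ℤ × ℤ => v.2.1) hc
    have h2 := congrArg (fun v : Idx l × ℤ × ℤ => v.2.2) hc
    simp only at h1 h2
    have : a.1 = -m1 - m2 := by omega
    have : a.2 = -n1 - n2 := by omega
    exact Prod.ext ‹a.1 = -m1 - m2› ‹a.2 = -n1 - n2›
  rw [finsum_eq_single _ i (fun k hk => ?_)]
  rotate_left
  · rw [if_neg, smul_zero]
    intro hc
    exact hk (congrArg (fun v : Idx l × ℤ × ℤ => v.1) hc)
  rw [if_pos (by simp only [Prod.mk.injEq]; exact ⟨trivial, by ring, by ring⟩)]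

theorem collapseW3 (q μ : ℂ) (i : Idx l) (m1 n1 m2 n2 : ℤ) (p : V l) :
    (∑ᶠ k : Idx l, ∑ᶠ a : ℤ × ℤ, ∑ᶠ j : Idx l, ∑ᶠ mm : (ℤ × ℤ) × ℤ × ℤ,
      (q ^ (a.2 * m2) * q ^ (n1 * mm.2.1 + mm.1.2 * m1 + mm.1.2 * mm.2.1)) •
        (X (j, m1 + mm.1.1 + mm.2.1, n1 + mm.1.2 + mm.2.2) *
          (if ((k, m2 + a.1, n2 + a.2) : Idx l × ℤ × ℤ) = ((i, mm.2.1, mm.2.2) : Idx l × ℤ × ℤ)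
            then pderiv (j, mm.1.1, mm.1.2) (pderiv (k, a.1, a.2) p) else 0)))
    = ∑ᶠ j : Idx l, ∑ᶠ mm : (ℤ × ℤ) × ℤ × ℤ,
        (q ^ ((mm.2.2 - n2) * m2) * q ^ (n1 * mm.2.1 + mm.1.2 * m1 + mm.1.2 * mm.2.1)) •
          (X (j, m1 + mm.1.1 + mm.2.1, n1 + mm.1.2 + mm.2.2) *
            pderiv (j, mm.1.1, mm.1.2) (pderiv (i, mm.2.1 - m2, mm.2.2 - n2) p)) := by
  refine (finsum_swap4 (M := V l) (fun (k : Idx l) (a : ℤ × ℤ) (j : Idx l)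
      (mm : (ℤ × ℤ) × ℤ × ℤ) =>
      (q ^ (a.2 * m2) * q ^ (n1 * mm.2.1 + mm.1.2 * m1 + mm.1.2 * mm.2.1)) •
        (X (j, m1 + mm.1.1 + mm.2.1, n1 + mm.1.2 + mm.2.2) *
          (if ((k, m2 + a.1, n2 + a.2) : Idx l × ℤ × ℤ) = ((i, mm.2.1, mm.2.2) : Idx l × ℤ × ℤ)
            then pderiv (j, mm.1.1, mm.1.2) (pderiv (k, a.1, a.2) p) else 0))) ?_).trans ?_
  · apply Set.Finite.subset
      ((Set.finite_univ.prod (S2_finite p)).prod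
        (Set.finite_univ.prod ((S2_finite p).prod
          ((S2_finite p).image (fun b : ℤ × ℤ => ((m2 + b.1, n2 + b.2) : ℤ × ℤ))))))
    rintro ⟨⟨k, a⟩, j, mm⟩ hx
    simp only [Function.mem_support] at hx
    by_cases hcond : ((k, m2 + a.1, n2 + a.2) : Idx l × ℤ × ℤ)
        = ((i, mm.2.1, mm.2.2) : Idx l × ℤ × ℤ)
    · have hP : pderiv (j, mm.1.1, mm.1.2) (pderiv (k, a.1, a.2) p) ≠ 0 := by
        intro h0
        rw [if_pos hcond, h0] at hx
        simp at hx
      have hP2 : pderiv (k, a.1, a.2) p ≠ 0 := by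
        intro h0
        rw [h0] at hP
        simp at hP
      have h1 := congrArg (fun v : Idx l × ℤ × ℤ => v.2.1) hcond
      have h2 := congrArg (fun v : Idx l × ℤ × ℤ => v.2.2) hcond
      simp only at h1 h2
      refine ⟨⟨Set.mem_univ _, mem_S2 hP2⟩, Set.mem_univ _,
        S2_pd_subset _ (mem_S2 hP), ⟨a, mem_S2 hP2, ?_⟩⟩
      exact Prod.ext h1 h2
    · rw [if_neg hcond] at hx
      simp at hx
  · apply finsum_congr; intro j
    apply finsum_congr; intro mm
    rw [finsum_congr (fun k => finsum_eq_single _ ((mm.2.1 - m2, mm.2.2 - n2) : ℤ × ℤ)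
      (fun a ha => ?_))]
    rotate_left
    · rw [if_neg, mul_zero, smul_zero]
      intro hc
      apply ha
      have h1 := congrArg (fun v : Idx l × ℤ × ℤ => v.2.1) hc
      have h2 := congrArg (fun v : Idx l × ℤ × ℤ => v.2.2) hc
      simp only at h1 h2
      have e1 : a.1 = mm.2.1 - m2 := by omega
      have e2 : a.2 = mm.2.2 - n2 := by omega
      exact Prod.ext e1 e2
    rw [finsum_eq_single _ i (fun k hk => ?_)]
    rotate_left
    · rw [if_neg, mul_zero, smul_zero]
      intro hc
      exact hk (congrArg (fun v : Idx l × ℤ × ℤ => v.1) hc)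
    rw [if_pos (by simp only [Prod.mk.injEq]; exact ⟨trivial, by ring, by ring⟩)]

theorem collapseW4 (q μ : ℂ) (i : Idx l) (m1 n1 m2 n2 : ℤ) (p : V l) :
    (∑ᶠ k : Idx l, ∑ᶠ a : ℤ × ℤ, ∑ᶠ j : Idx l, ∑ᶠ mm : (ℤ × ℤ) × ℤ × ℤ,
      (q ^ (a.2 * m2) * q ^ (n1 * mm.2.1 + mm.1.2 * m1 + mm.1.2 * mm.2.1)) •
        (X (j, m1 + mm.1.1 + mm.2.1, n1 + mm.1.2 + mm.2.2) *
          (if ((k, m2 + a.1, n2 + a.2) : Idx l × ℤ × ℤ) = ((j, mm.1.1, mm.1.2) : Idx l × ℤ × ℤ)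
            then pderiv (i, mm.2.1, mm.2.2) (pderiv (k, a.1, a.2) p) else 0)))
    = ∑ᶠ j : Idx l, ∑ᶠ mm : (ℤ × ℤ) × ℤ × ℤ,
        (q ^ ((mm.1.2 - n2) * m2) * q ^ (n1 * mm.2.1 + mm.1.2 * m1 + mm.1.2 * mm.2.1)) •
          (X (j, m1 + mm.1.1 + mm.2.1, n1 + mm.1.2 + mm.2.2) *
            pderiv (i, mm.2.1, mm.2.2) (pderiv (j, mm.1.1 - m2, mm.1.2 - n2) p)) := by
  refine (finsum_swap4 (M := V l) (fun (k : Idx l) (a : ℤ × ℤ) (j : Idx l)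
      (mm : (ℤ × ℤ) × ℤ × ℤ) =>
      (q ^ (a.2 * m2) * q ^ (n1 * mm.2.1 + mm.1.2 * m1 + mm.1.2 * mm.2.1)) •
        (X (j, m1 + mm.1.1 + mm.2.1, n1 + mm.1.2 + mm.2.2) *
          (if ((k, m2 + a.1, n2 + a.2) : Idx l × ℤ × ℤ) = ((j, mm.1.1, mm.1.2) : Idx l × ℤ × ℤ)
            then pderiv (i, mm.2.1, mm.2.2) (pderiv (k, a.1, a.2) p) else 0))) ?_).trans ?_
  · apply Set.Finite.subset
      ((Set.finite_univ.prod (S2_finite p)).prod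
        (Set.finite_univ.prod
          (((S2_finite p).image (fun b : ℤ × ℤ => ((m2 + b.1, n2 + b.2) : ℤ × ℤ))).prod
            (S2_finite p))))
    rintro ⟨⟨k, a⟩, j, mm⟩ hx
    simp only [Function.mem_support] at hx
    by_cases hcond : ((k, m2 + a.1, n2 + a.2) : Idx l × ℤ × ℤ)
        = ((j, mm.1.1, mm.1.2) : Idx l × ℤ × ℤ)
    · have hP : pderiv (i, mm.2.1, mm.2.2) (pderiv (k, a.1, a.2) p) ≠ 0 := by
        intro h0
        rw [if_pos hcond, h0] at hx
        simp at hx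
      have hP2 : pderiv (k, a.1, a.2) p ≠ 0 := by
        intro h0
        rw [h0] at hP
        simp at hP
      have h1 := congrArg (fun v : Idx l × ℤ × ℤ => v.2.1) hcond
      have h2 := congrArg (fun v : Idx l × ℤ × ℤ => v.2.2) hcond
      simp only at h1 h2
      refine ⟨⟨Set.mem_univ _, mem_S2 hP2⟩, Set.mem_univ _,
        ⟨a, mem_S2 hP2, Prod.ext h1 h2⟩, S2_pd_subset _ (mem_S2 hP)⟩
    · rw [if_neg hcond] at hx
      simp at hx
  · apply finsum_congr; intro j
    apply finsum_congr; intro mm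
    rw [finsum_congr (fun k => finsum_eq_single _ ((mm.1.1 - m2, mm.1.2 - n2) : ℤ × ℤ)
      (fun a ha => ?_))]
    rotate_left
    · rw [if_neg, mul_zero, smul_zero]
      intro hc
      apply ha
      have h1 := congrArg (fun v : Idx l × ℤ × ℤ => v.2.1) hc
      have h2 := congrArg (fun v : Idx l × ℤ × ℤ => v.2.2) hc
      simp only at h1 h2
      have e1 : a.1 = mm.1.1 - m2 := by omega
      have e2 : a.2 = mm.1.2 - n2 := by omega
      exact Prod.ext e1 e2
    rw [finsum_eq_single _ j (fun k hk => ?_)]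
    rotate_left
    · rw [if_neg, mul_zero, smul_zero]
      intro hc
      exact hk (congrArg (fun v : Idx l × ℤ × ℤ => v.1) hc)
    rw [if_pos (by simp only [Prod.mk.injEq]; exact ⟨trivial, by ring, by ring⟩)]
end Aux9

section Aux10
open MvPolynomial Function

variable {l : ℕ}

/-- shift the second pair -/
def shiftSnd (m2 n2 : ℤ) : ((ℤ × ℤ) × ℤ × ℤ) ≃ ((ℤ × ℤ) × ℤ × ℤ) where
  toFun mm := (mm.1, (m2 + mm.2.1, n2 + mm.2.2))
  invFun mm := (mm.1, (mm.2.1 - m2, mm.2.2 - n2))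
  left_inv mm := by
    refine Prod.ext rfl (Prod.ext ?_ ?_) <;> dsimp <;> ring
  right_inv mm := by
    refine Prod.ext rfl (Prod.ext ?_ ?_) <;> dsimp <;> ring

/-- shift the first pair -/
def shiftFst (m2 n2 : ℤ) : ((ℤ × ℤ) × ℤ × ℤ) ≃ ((ℤ × ℤ) × ℤ × ℤ) where
  toFun mm := ((m2 + mm.1.1, n2 + mm.1.2), mm.2)
  invFun mm := ((mm.1.1 - m2, mm.1.2 - n2), mm.2)
  left_inv mm := by
    refine Prod.ext (Prod.ext ?_ ?_) rfl <;> dsimp <;> ring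
  right_inv mm := by
    refine Prod.ext (Prod.ext ?_ ?_) rfl <;> dsimp <;> ring

theorem zk_eq_w2 (q μ : ℂ) (i : Idx l) (m1 n1 m2 n2 : ℤ) (p : V l) :
    (∑ᶠ k : Idx l, ∑ᶠ a : ℤ × ℤ,
      (q ^ (a.2 * m2) * (q ^ (-(m1 * n1)) * μ)) •
        (X (k, m2 + a.1, n2 + a.2) * pderiv (k, a.1, a.2) (pderiv (i, -m1, -n1) p)))
    = ∑ᶠ k : Idx l, ∑ᶠ a : ℤ × ℤ,
      (q ^ (a.2 * m2) * (q ^ (-(m1 * n1)) * μ)) •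
        (X (k, m2 + a.1, n2 + a.2) * pderiv (i, -m1, -n1) (pderiv (k, a.1, a.2) p)) :=
  finsum_congr fun k => finsum_congr fun a => by rw [pd_comm]

theorem zc_eq_w5 (q μ : ℂ) (i : Idx l) (m1 n1 m2 n2 : ℤ) (p : V l) :
    (∑ᶠ k : Idx l, ∑ᶠ a : ℤ × ℤ, ∑ᶠ j : Idx l, ∑ᶠ mm : (ℤ × ℤ) × ℤ × ℤ,
      (q ^ (a.2 * m2) * q ^ (n1 * mm.2.1 + mm.1.2 * m1 + mm.1.2 * mm.2.1)) •
        (X (k, m2 + a.1, n2 + a.2) *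
          (X (j, m1 + mm.1.1 + mm.2.1, n1 + mm.1.2 + mm.2.2) *
            pderiv (k, a.1, a.2)
              (pderiv (j, mm.1.1, mm.1.2) (pderiv (i, mm.2.1, mm.2.2) p)))))
    = ∑ᶠ k : Idx l, ∑ᶠ a : ℤ × ℤ, ∑ᶠ j : Idx l, ∑ᶠ mm : (ℤ × ℤ) × ℤ × ℤ,
      (q ^ (a.2 * m2) * q ^ (n1 * mm.2.1 + mm.1.2 * m1 + mm.1.2 * mm.2.1)) •
        (X (j, m1 + mm.1.1 + mm.2.1, n1 + mm.1.2 + mm.2.2) *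
          (X (k, m2 + a.1, n2 + a.2) *
            pderiv (j, mm.1.1, mm.1.2)
              (pderiv (i, mm.2.1, mm.2.2) (pderiv (k, a.1, a.2) p)))) :=
  finsum_congr fun k => finsum_congr fun a => finsum_congr fun j => finsum_congr fun mm => by
    rw [pd_comm (k, a.1, a.2) (j, mm.1.1, mm.1.2), pd_comm (k, a.1, a.2) (i, mm.2.1, mm.2.2),
      mul_left_comm]

theorem w3_eq_zif (q μ : ℂ) (hq : q ≠ 0) (i : Idx l) (m1 n1 m2 n2 : ℤ) (p : V l) :
    (∑ᶠ j : Idx l, ∑ᶠ mm : (ℤ × ℤ) × ℤ × ℤ,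
        (q ^ ((mm.2.2 - n2) * m2) * q ^ (n1 * mm.2.1 + mm.1.2 * m1 + mm.1.2 * mm.2.1)) •
          (X (j, m1 + mm.1.1 + mm.2.1, n1 + mm.1.2 + mm.2.2) *
            pderiv (j, mm.1.1, mm.1.2) (pderiv (i, mm.2.1 - m2, mm.2.2 - n2) p)))
    = ∑ᶠ j : Idx l, ∑ᶠ mm : (ℤ × ℤ) × ℤ × ℤ,
        (q ^ ((n1 + mm.1.2 + mm.2.2) * m2) * q ^ (n1 * mm.2.1 + mm.1.2 * m1 + mm.1.2 * mm.2.1)) •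
          (X (j, m2 + (m1 + mm.1.1 + mm.2.1), n2 + (n1 + mm.1.2 + mm.2.2)) *
            pderiv (j, mm.1.1, mm.1.2) (pderiv (i, mm.2.1, mm.2.2) p)) := by
  refine finsum_congr fun j => ?_
  refine ((finsum_comp_equiv (shiftSnd m2 n2)).symm.trans (finsum_congr fun mm => ?_))
  simp only [shiftSnd, Equiv.coe_fn_mk]
  have hv : ((i, m2 + mm.2.1 - m2, n2 + mm.2.2 - n2) : Idx l × ℤ × ℤ)
      = (i, mm.2.1, mm.2.2) := by
    simp only [Prod.mk.injEq]
    exact ⟨trivial, by ring, by ring⟩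
  have hX : ((j, m1 + mm.1.1 + (m2 + mm.2.1), n1 + mm.1.2 + (n2 + mm.2.2)) : Idx l × ℤ × ℤ)
      = (j, m2 + (m1 + mm.1.1 + mm.2.1), n2 + (n1 + mm.1.2 + mm.2.2)) := by
    simp only [Prod.mk.injEq]
    exact ⟨trivial, by ring, by ring⟩
  rw [hv, hX]
  congr 1
  rw [← zpow_add₀ hq, ← zpow_add₀ hq]
  congr 1
  ring

theorem rhs_eq (q μ : ℂ) (hq : q ≠ 0) (i : Idx l) (m1 n1 m2 n2 : ℤ) (p : V l) :
    -(q ^ (n2 * m1) • eUp l q μ i (m1 + m2) (n1 + n2) p)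
    = -((q ^ ((-n1 - n2) * m2) * (q ^ (-(m1 * n1)) * μ)) • pderiv (i, -m1 - m2, -n1 - n2) p)
      + ∑ᶠ j : Idx l, ∑ᶠ mm : (ℤ × ℤ) × ℤ × ℤ,
          (q ^ ((mm.1.2 - n2) * m2) * q ^ (n1 * mm.2.1 + mm.1.2 * m1 + mm.1.2 * mm.2.1)) •
            (X (j, m1 + mm.1.1 + mm.2.1, n1 + mm.1.2 + mm.2.2) *
              pderiv (i, mm.2.1, mm.2.2) (pderiv (j, mm.1.1 - m2, mm.1.2 - n2) p)) := by
  unfold eUp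
  rw [smul_sub, neg_sub]
  have hA : q ^ (n2 * m1) • q ^ (-((m1 + m2) * (n1 + n2))) • μ •
      pderiv (i, -(m1 + m2), -(n1 + n2)) p
      = (q ^ ((-n1 - n2) * m2) * (q ^ (-(m1 * n1)) * μ)) • pderiv (i, -m1 - m2, -n1 - n2) p := by
    have hv : ((i, -(m1 + m2), -(n1 + n2)) : Idx l × ℤ × ℤ) = (i, -m1 - m2, -n1 - n2) := by
      simp only [Prod.mk.injEq]
      exact ⟨trivial, by ring, by ring⟩
    rw [hv, smul_smul, smul_smul, ← mul_assoc (q ^ ((-n1 - n2) * m2))]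
    congr 2
    rw [← zpow_add₀ hq, ← zpow_add₀ hq]
    congr 1
    ring
  have hB : q ^ (n2 * m1) • (∑ᶠ j : Idx l, ∑ᶠ mm : (ℤ × ℤ) × ℤ × ℤ,
      q ^ ((n1 + n2) * mm.2.1 + mm.1.2 * (m1 + m2) + mm.1.2 * mm.2.1) •
        (X (j, m1 + m2 + mm.1.1 + mm.2.1, n1 + n2 + mm.1.2 + mm.2.2) *
          pderiv (j, mm.1.1, mm.1.2) (pderiv (i, mm.2.1, mm.2.2) p)))
      = ∑ᶠ j : Idx l, ∑ᶠ mm : (ℤ × ℤ) × ℤ × ℤ,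
          (q ^ ((mm.1.2 - n2) * m2) * q ^ (n1 * mm.2.1 + mm.1.2 * m1 + mm.1.2 * mm.2.1)) •
            (X (j, m1 + mm.1.1 + mm.2.1, n1 + mm.1.2 + mm.2.2) *
              pderiv (i, mm.2.1, mm.2.2) (pderiv (j, mm.1.1 - m2, mm.1.2 - n2) p)) := by
    rw [smul_finsum' _ (Set.toFinite _)]
    refine finsum_congr fun j => ?_
    rw [smul_finsum' _ (fin_mm p i j (fun mm w =>
      q ^ ((n1 + n2) * mm.2.1 + mm.1.2 * (m1 + m2) + mm.1.2 * mm.2.1) •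
        (X (j, m1 + m2 + mm.1.1 + mm.2.1, n1 + n2 + mm.1.2 + mm.2.2) * w)) (by simp))]
    refine Eq.trans (finsum_congr fun mm => ?_) (finsum_comp_equiv (shiftFst m2 n2))
    simp only [shiftFst, Equiv.coe_fn_mk]
    have hv : ((j, m2 + mm.1.1 - m2, n2 + mm.1.2 - n2) : Idx l × ℤ × ℤ)
        = (j, mm.1.1, mm.1.2) := by
      simp only [Prod.mk.injEq]
      exact ⟨trivial, by ring, by ring⟩
    have hX : ((j, m1 + (m2 + mm.1.1) + mm.2.1, n1 + (n2 + mm.1.2) + mm.2.2) : Idx l × ℤ × ℤ)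
        = (j, m1 + m2 + mm.1.1 + mm.2.1, n1 + n2 + mm.1.2 + mm.2.2) := by
      simp only [Prod.mk.injEq]
      exact ⟨trivial, by ring, by ring⟩
    rw [hv, hX, pd_comm, smul_smul]
    congr 1
    rw [← zpow_add₀ hq, ← zpow_add₀ hq]
    congr 1
    ring
  rw [hA, hB]
  abel
end Aux10

theorem stmt10 (l : ℕ) (hl : 2 ≤ l) (q μ : ℂ) (hq : q ≠ 0)
    (i : Idx l) (m1 n1 m2 n2 : ℤ) :
    oComm (eUp l q μ i m1 n1) (e11 l q μ m2 n2) = fun p =>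
      -(q ^ (n2 * m1) • eUp l q μ i (m1 + m2) (n1 + n2) p) := by
  funext p
  simp only [oComm, e11]
  rw [eUp_sub q μ i m1 n1, eUp_smul q μ i m1 n1]
  rw [expandZ q μ i m1 n1 m2 n2 p, expandW q μ i m1 n1 m2 n2 p]
  rw [collapseZif q μ i m1 n1 m2 n2 p, collapseW1 q μ i m1 n1 m2 n2 p,
    collapseW3 q μ i m1 n1 m2 n2 p, collapseW4 q μ i m1 n1 m2 n2 p,
    zk_eq_w2 q μ i m1 n1 m2 n2 p, zc_eq_w5 q μ i m1 n1 m2 n2 p,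
    w3_eq_zif q μ hq i m1 n1 m2 n2 p, rhs_eq q μ hq i m1 n1 m2 n2 p]
  abel
end

section
/- For all m1,n1,m2,n2 ∈ Z, [e_{11}(m1,n1), e_{11}(m2,n2)] = (q^{m2 n1} − q^{m1 n2}) e_{11}(m1+m2, n1+n2). -/
open MvPolynomial

noncomputable instance (l : ℕ) : Fintype (Idx l) :=
  Fintype.subtype (Finset.Icc 2 l) (by intro x; simp [Finset.mem_Icc])

theorem pderiv_comm' {σ : Type} (i j : σ) (p : MvPolynomial σ ℂ) :
    pderiv i (pderiv j p) = pderiv j (pderiv i p) := by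
  induction p using MvPolynomial.induction_on' with
  | add p q hp hq => simp [map_add, hp, hq]
  | monomial s a =>
      classical
      rcases eq_or_ne i j with rfl | hij
      · rfl
      · simp only [pderiv_monomial]
        rw [tsub_right_comm]
        congr 1
        rw [Finsupp.tsub_apply, Finsupp.tsub_apply, Finsupp.single_eq_of_ne hij,
          Finsupp.single_eq_of_ne (Ne.symm hij)]
        push_cast [Nat.sub_zero]
        ring

theorem pderiv_X' {l : ℕ} (v w : Idx l × ℤ × ℤ) :
    pderiv v (X w : V l) = if v = w then 1 else 0 := by
  rcases eq_or_ne v w with rfl | h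
  · simp [pderiv_X_self]
  · simp [h, pderiv_X_of_ne (Ne.symm h)]

/-- `S` supports all partial derivatives of `p`. -/
def Good (l : ℕ) (S : Finset (ℤ × ℤ)) (p : V l) : Prop :=
  ∀ (j : Idx l) (mn : ℤ × ℤ), mn ∉ S → pderiv (j, mn.1, mn.2) p = 0

/-- The summation part of `e11`. -/
noncomputable def Eop (l : ℕ) (q : ℂ) (m1 n1 : ℤ) (p : V l) : V l :=
  ∑ᶠ j : Idx l, ∑ᶠ mn : ℤ × ℤ,
      q ^ (mn.2 * m1) • (X (j, m1 + mn.1, n1 + mn.2) * pderiv (j, mn.1, mn.2) p)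

theorem Good_vars {l : ℕ} (p : V l) : Good l (p.vars.image (fun v => v.2)) p := by
  intro j mn h
  apply pderiv_eq_zero_of_notMem_vars
  intro hv
  exact h (Finset.mem_image.2 ⟨(j, mn.1, mn.2), hv, rfl⟩)

theorem Good.mono {l : ℕ} {S T : Finset (ℤ × ℤ)} {p : V l} (h : Good l S p) (hST : S ⊆ T) :
    Good l T p := fun j mn hmn => h j mn (fun hS => hmn (hST hS))

theorem Good.smul_sub {l : ℕ} {S : Finset (ℤ × ℤ)} {p r : V l} (hp : Good l S p)
    (hr : Good l S r) (a : ℂ) : Good l S (a • p - r) := by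
  intro j mn h
  rw [map_sub, Derivation.map_smul, hp j mn h, hr j mn h, smul_zero, sub_zero]

theorem Eop_eq_sum {l : ℕ} (q : ℂ) {m1 n1 : ℤ} {p : V l} {S : Finset (ℤ × ℤ)}
    (hS : Good l S p) :
    Eop l q m1 n1 p = ∑ j : Idx l, ∑ mn ∈ S,
      q ^ (mn.2 * m1) • (X (j, m1 + mn.1, n1 + mn.2) * pderiv (j, mn.1, mn.2) p) := by
  rw [Eop, finsum_eq_sum_of_fintype]
  refine Finset.sum_congr rfl fun j _ => ?_
  refine finsum_eq_sum_of_support_subset _ fun mn hmn => ?_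
  by_contra h
  apply hmn
  simp only [Function.mem_support, ne_eq, not_not]
  rw [hS j mn h, mul_zero, smul_zero]

theorem Good.eop {l : ℕ} (q : ℂ) {m2 n2 : ℤ} {p : V l} {S : Finset (ℤ × ℤ)}
    (hS : Good l S p)
    (hcl : ∀ (j : Idx l) (mn : ℤ × ℤ), pderiv (j, mn.1, mn.2) p ≠ 0 →
      (m2 + mn.1, n2 + mn.2) ∈ S) :
    Good l S (Eop l q m2 n2 p) := by
  intro j0 mn0 h0
  rw [Eop_eq_sum q hS, map_sum]
  refine Finset.sum_eq_zero fun k _ => ?_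
  rw [map_sum]
  refine Finset.sum_eq_zero fun m' _ => ?_
  rw [Derivation.map_smul, pderiv_mul, pderiv_comm', hS j0 mn0 h0, map_zero, mul_zero, add_zero]
  by_cases hP : pderiv ((k, m'.1, m'.2) : Idx l × ℤ × ℤ) p = 0
  · rw [hP, mul_zero, smul_zero]
  · have hne : ((j0, mn0.1, mn0.2) : Idx l × ℤ × ℤ) ≠ (k, m2 + m'.1, n2 + m'.2) := by
      intro h
      apply h0
      have h2 := congrArg Prod.snd h
      simp only at h2
      have : mn0 = (m2 + m'.1, n2 + m'.2) := by
        rw [← Prod.mk.eta (p := mn0), h2]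
      rw [this]
      exact hcl k m' hP
    rw [pderiv_X_of_ne (Ne.symm hne), zero_mul, smul_zero]

theorem Eop_smul_sub {l : ℕ} (q : ℂ) {m1 n1 : ℤ} {p r : V l} {S : Finset (ℤ × ℤ)}
    (hp : Good l S p) (hr : Good l S r) (a : ℂ) :
    Eop l q m1 n1 (a • p - r) = a • Eop l q m1 n1 p - Eop l q m1 n1 r := by
  have key : ∀ (c b : ℂ) (x y z : V l), c • (x * (b • y - z)) = b • (c • (x * y)) - c • (x * z) := by
    intro c b x y z
    rw [mul_sub, mul_smul_comm, smul_sub, smul_comm]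
  rw [Eop_eq_sum q (hp.smul_sub hr a), Eop_eq_sum q hp, Eop_eq_sum q hr]
  simp only [map_sub, Derivation.map_smul, key, Finset.sum_sub_distrib, Finset.smul_sum]

/-- swap the two double sums -/
theorem sum4_swap {l : ℕ} (S : Finset (ℤ × ℤ)) (F : Idx l → ℤ × ℤ → Idx l → ℤ × ℤ → V l) :
    (∑ j : Idx l, ∑ mn ∈ S, ∑ k : Idx l, ∑ m' ∈ S, F j mn k m') =
    ∑ j : Idx l, ∑ mn ∈ S, ∑ k : Idx l, ∑ m' ∈ S, F k m' j mn := by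
  have h : ∀ G : (Idx l × (ℤ × ℤ)) → (Idx l × (ℤ × ℤ)) → V l,
      (∑ a ∈ Finset.univ ×ˢ S, ∑ b ∈ Finset.univ ×ˢ S, G a b) =
      ∑ a ∈ Finset.univ ×ˢ S, ∑ b ∈ Finset.univ ×ˢ S, G b a := fun G => Finset.sum_comm
  have e : ∀ G : (Idx l × (ℤ × ℤ)) → (Idx l × (ℤ × ℤ)) → V l,
      (∑ j : Idx l, ∑ mn ∈ S, ∑ k : Idx l, ∑ m' ∈ S, G (j, mn) (k, m')) =
      ∑ a ∈ Finset.univ ×ˢ S, ∑ b ∈ Finset.univ ×ˢ S, G a b := by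
    intro G
    rw [Finset.sum_product]
    refine Finset.sum_congr rfl fun j _ => ?_
    refine Finset.sum_congr rfl fun mn _ => ?_
    rw [Finset.sum_product]
  calc (∑ j : Idx l, ∑ mn ∈ S, ∑ k : Idx l, ∑ m' ∈ S, F j mn k m')
      = ∑ a ∈ Finset.univ ×ˢ S, ∑ b ∈ Finset.univ ×ˢ S, F a.1 a.2 b.1 b.2 :=
        e (fun a b => F a.1 a.2 b.1 b.2)
    _ = ∑ a ∈ Finset.univ ×ˢ S, ∑ b ∈ Finset.univ ×ˢ S, F b.1 b.2 a.1 a.2 :=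
        h (fun a b => F a.1 a.2 b.1 b.2)
    _ = ∑ j : Idx l, ∑ mn ∈ S, ∑ k : Idx l, ∑ m' ∈ S, F k m' j mn :=
        (e (fun a b => F b.1 b.2 a.1 a.2)).symm

set_option maxHeartbeats 2000000 in
theorem core {l : ℕ} (q : ℂ) (hq : q ≠ 0) (m1 n1 m2 n2 : ℤ) (p : V l)
    {S : Finset (ℤ × ℤ)} (hS : Good l S p)
    (hcl1 : ∀ (j : Idx l) (mn : ℤ × ℤ), pderiv (j, mn.1, mn.2) p ≠ 0 →
      (m1 + mn.1, n1 + mn.2) ∈ S)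
    (hcl2 : ∀ (j : Idx l) (mn : ℤ × ℤ), pderiv (j, mn.1, mn.2) p ≠ 0 →
      (m2 + mn.1, n2 + mn.2) ∈ S) :
    Eop l q m1 n1 (Eop l q m2 n2 p) - Eop l q m2 n2 (Eop l q m1 n1 p) =
      (q ^ (m1 * n2) - q ^ (m2 * n1)) • Eop l q (m1 + m2) (n1 + n2) p := by
  classical
  -- expansion of Eop a b (Eop c d p), with the δ-part already re-ordered by sum4_swap
  have expand : ∀ a b c d : ℤ,
      (∀ (j : Idx l) (mn : ℤ × ℤ), pderiv (j, mn.1, mn.2) p ≠ 0 →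
        (c + mn.1, d + mn.2) ∈ S) →
      Eop l q a b (Eop l q c d p) =
      (∑ j : Idx l, ∑ mn ∈ S, ∑ k : Idx l, ∑ m' ∈ S,
        (q ^ (m'.2 * a) * q ^ (mn.2 * c)) •
          (X (k, a + m'.1, b + m'.2) *
            (pderiv ((k, m'.1, m'.2) : Idx l × ℤ × ℤ) (X (j, c + mn.1, d + mn.2)) *
              pderiv ((j, mn.1, mn.2) : Idx l × ℤ × ℤ) p))) +
      ∑ j : Idx l, ∑ mn ∈ S, ∑ k : Idx l, ∑ m' ∈ S,
        (q ^ (mn.2 * a) * q ^ (m'.2 * c)) •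
          (X (j, a + mn.1, b + mn.2) *
            (X (k, c + m'.1, d + m'.2) *
              pderiv ((j, mn.1, mn.2) : Idx l × ℤ × ℤ)
                (pderiv ((k, m'.1, m'.2) : Idx l × ℤ × ℤ) p))) := by
    intro a b c d hcl
    rw [Eop_eq_sum q (hS.eop q hcl)]
    simp only [Eop_eq_sum q hS]
    simp only [map_sum, Derivation.map_smul, pderiv_mul, Finset.mul_sum, Finset.smul_sum, mul_add, smul_add, mul_smul_comm,
      smul_smul, Finset.sum_add_distrib]
    rw [add_left_inj]
    exact sum4_swap S (fun j mn k m' =>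
      (q ^ (mn.2 * a) * q ^ (m'.2 * c)) •
        (X (j, a + mn.1, b + mn.2) *
          (pderiv ((j, mn.1, mn.2) : Idx l × ℤ × ℤ) (X (k, c + m'.1, d + m'.2)) *
            pderiv ((k, m'.1, m'.2) : Idx l × ℤ × ℤ) p)))
  have hdelta : ∀ a b c d : ℤ,
      (∀ (j : Idx l) (mn : ℤ × ℤ), pderiv (j, mn.1, mn.2) p ≠ 0 →
        (c + mn.1, d + mn.2) ∈ S) →
      (∑ j : Idx l, ∑ mn ∈ S, ∑ k : Idx l, ∑ m' ∈ S,
        (q ^ (m'.2 * a) * q ^ (mn.2 * c)) •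
          (X (k, a + m'.1, b + m'.2) *
            (pderiv ((k, m'.1, m'.2) : Idx l × ℤ × ℤ) (X (j, c + mn.1, d + mn.2)) *
              pderiv ((j, mn.1, mn.2) : Idx l × ℤ × ℤ) p))) =
      ∑ j : Idx l, ∑ mn ∈ S,
        q ^ (a * d) • (q ^ (mn.2 * (a + c)) •
          (X (j, a + c + mn.1, b + d + mn.2) *
            pderiv ((j, mn.1, mn.2) : Idx l × ℤ × ℤ) p)) := by
    intro a b c d hcl
    refine Finset.sum_congr rfl fun j _ => Finset.sum_congr rfl fun mn _ => ?_
    have hk0 : ∀ k : Idx l, k ∈ Finset.univ → k ≠ j →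
        (∑ m' ∈ S, (q ^ (m'.2 * a) * q ^ (mn.2 * c)) •
          (X (k, a + m'.1, b + m'.2) *
            (pderiv ((k, m'.1, m'.2) : Idx l × ℤ × ℤ) (X (j, c + mn.1, d + mn.2)) *
              pderiv ((j, mn.1, mn.2) : Idx l × ℤ × ℤ) p))) = 0 := by
      intro k _ hkj
      refine Finset.sum_eq_zero fun m' _ => ?_
      have : ((j, c + mn.1, d + mn.2) : Idx l × ℤ × ℤ) ≠ (k, m'.1, m'.2) := by
        intro h; exact hkj ((congrArg Prod.fst h).symm)
      rw [pderiv_X_of_ne this, zero_mul, mul_zero, smul_zero]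
    rw [Finset.sum_eq_single_of_mem j (Finset.mem_univ j) hk0]
    have ht : ∀ m' : ℤ × ℤ,
        (q ^ (m'.2 * a) * q ^ (mn.2 * c)) •
          (X (j, a + m'.1, b + m'.2) *
            (pderiv ((j, m'.1, m'.2) : Idx l × ℤ × ℤ) (X (j, c + mn.1, d + mn.2)) *
              pderiv ((j, mn.1, mn.2) : Idx l × ℤ × ℤ) p)) =
        if m' = (c + mn.1, d + mn.2) then
          (q ^ (m'.2 * a) * q ^ (mn.2 * c)) •
            (X (j, a + m'.1, b + m'.2) * pderiv ((j, mn.1, mn.2) : Idx l × ℤ × ℤ) p)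
        else 0 := by
      intro m'
      rcases eq_or_ne m' ((c + mn.1, d + mn.2) : ℤ × ℤ) with rfl | h
      · rw [if_pos rfl]
        have : pderiv ((j, (c + mn.1, d + mn.2).1, (c + mn.1, d + mn.2).2) : Idx l × ℤ × ℤ)
            (X (j, c + mn.1, d + mn.2) : V l) = 1 := pderiv_X_self _
        rw [this, one_mul]
      · rw [if_neg h]
        have hne : ((j, c + mn.1, d + mn.2) : Idx l × ℤ × ℤ) ≠ (j, m'.1, m'.2) := by
          intro he
          apply h
          have h2 := congrArg Prod.snd he
          simp only at h2
          rw [← Prod.mk.eta (p := m'), ← h2]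
        rw [pderiv_X_of_ne hne, zero_mul, mul_zero, smul_zero]
    rw [Finset.sum_congr rfl fun m' _ => ht m', Finset.sum_ite_eq' S]
    by_cases hP : pderiv ((j, mn.1, mn.2) : Idx l × ℤ × ℤ) p = 0
    · simp [hP]
    · rw [if_pos (hcl j mn hP)]
      have e1 : a + ((c + mn.1, d + mn.2) : ℤ × ℤ).1 = a + c + mn.1 := by
        simp; ring
      have e2 : b + ((c + mn.1, d + mn.2) : ℤ × ℤ).2 = b + d + mn.2 := by
        simp; ring
      rw [e1, e2, smul_smul]
      congr 1
      have e3 : (((c + mn.1, d + mn.2) : ℤ × ℤ).2) * a = a * d + mn.2 * a := by simp; ring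
      rw [e3, show mn.2 * (a + c) = mn.2 * a + mn.2 * c from by ring,
        zpow_add₀ hq, zpow_add₀ hq]
      ring
  have hsym : (∑ j : Idx l, ∑ mn ∈ S, ∑ k : Idx l, ∑ m' ∈ S,
      (q ^ (mn.2 * m2) * q ^ (m'.2 * m1)) •
        (X (j, m2 + mn.1, n2 + mn.2) *
          (X (k, m1 + m'.1, n1 + m'.2) *
            pderiv ((j, mn.1, mn.2) : Idx l × ℤ × ℤ)
              (pderiv ((k, m'.1, m'.2) : Idx l × ℤ × ℤ) p)))) =
      ∑ j : Idx l, ∑ mn ∈ S, ∑ k : Idx l, ∑ m' ∈ S,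
        (q ^ (mn.2 * m1) * q ^ (m'.2 * m2)) •
          (X (j, m1 + mn.1, n1 + mn.2) *
            (X (k, m2 + m'.1, n2 + m'.2) *
              pderiv ((j, mn.1, mn.2) : Idx l × ℤ × ℤ)
                (pderiv ((k, m'.1, m'.2) : Idx l × ℤ × ℤ) p))) := by
    rw [sum4_swap S (fun j mn k m' =>
      (q ^ (mn.2 * m2) * q ^ (m'.2 * m1)) •
        (X (j, m2 + mn.1, n2 + mn.2) *
          (X (k, m1 + m'.1, n1 + m'.2) *
            pderiv ((j, mn.1, mn.2) : Idx l × ℤ × ℤ)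
              (pderiv ((k, m'.1, m'.2) : Idx l × ℤ × ℤ) p))))]
    refine Finset.sum_congr rfl fun j _ => Finset.sum_congr rfl fun mn _ =>
      Finset.sum_congr rfl fun k _ => Finset.sum_congr rfl fun m' _ => ?_
    rw [mul_comm (q ^ (m'.2 * m2)), mul_left_comm (X ((k, m2 + m'.1, n2 + m'.2) : Idx l × ℤ × ℤ)),
      pderiv_comm']
  rw [expand m1 n1 m2 n2 hcl2, expand m2 n2 m1 n1 hcl1, hsym, add_sub_add_right_eq_sub,
    hdelta m1 n1 m2 n2 hcl2, hdelta m2 n2 m1 n1 hcl1, add_comm m2 m1, add_comm n2 n1,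
    Eop_eq_sum q hS]
  simp only [← Finset.smul_sum]
  rw [← sub_smul]

theorem stmt11 (l : ℕ) (hl : 2 ≤ l) (q μ : ℂ) (hq : q ≠ 0)
    (m1 n1 m2 n2 : ℤ) :
    oComm (e11 l q μ m1 n1) (e11 l q μ m2 n2) = fun p =>
      (q ^ (m2 * n1) - q ^ (m1 * n2)) • e11 l q μ (m1 + m2) (n1 + n2) p := by
  classical
  funext p
  set S₀ : Finset (ℤ × ℤ) := p.vars.image (fun v => v.2) with hS0def
  set S : Finset (ℤ × ℤ) := S₀ ∪ S₀.image (fun x => (m1 + x.1, n1 + x.2)) ∪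
    S₀.image (fun x => (m2 + x.1, n2 + x.2)) with hSdef
  have hS : Good l S p := (Good_vars p).mono
    (fun x hx => Finset.mem_union_left _ (Finset.mem_union_left _ hx))
  have hmem : ∀ (j : Idx l) (mn : ℤ × ℤ), pderiv (j, mn.1, mn.2) p ≠ 0 → mn ∈ S₀ := by
    intro j mn h
    by_contra hn
    exact h (Good_vars p j mn hn)
  have hcl1 : ∀ (j : Idx l) (mn : ℤ × ℤ), pderiv (j, mn.1, mn.2) p ≠ 0 →
      (m1 + mn.1, n1 + mn.2) ∈ S := fun j mn h =>
    Finset.mem_union_left _ (Finset.mem_union_right _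
      (Finset.mem_image.2 ⟨mn, hmem j mn h, rfl⟩))
  have hcl2 : ∀ (j : Idx l) (mn : ℤ × ℤ), pderiv (j, mn.1, mn.2) p ≠ 0 →
      (m2 + mn.1, n2 + mn.2) ∈ S := fun j mn h =>
    Finset.mem_union_right _ (Finset.mem_image.2 ⟨mn, hmem j mn h, rfl⟩)
  have hG1 : Good l S (Eop l q m1 n1 p) := hS.eop q hcl1
  have hG2 : Good l S (Eop l q m2 n2 p) := hS.eop q hcl2
  have he : ∀ (a b : ℤ) (r : V l), e11 l q μ a b r =
      (if (a, b) = ((0 : ℤ), (0 : ℤ)) then μ else 0) • r - Eop l q a b r := fun a b r => rfl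
  show e11 l q μ m1 n1 (e11 l q μ m2 n2 p) - e11 l q μ m2 n2 (e11 l q μ m1 n1 p) = _
  simp only [he]
  rw [Eop_smul_sub q hS hG2, Eop_smul_sub q hS hG1]
  have h1 : ((if (m1, n1) = ((0 : ℤ), (0 : ℤ)) then μ else 0) •
        ((if (m2, n2) = ((0 : ℤ), (0 : ℤ)) then μ else 0) • p - Eop l q m2 n2 p) -
      ((if (m2, n2) = ((0 : ℤ), (0 : ℤ)) then μ else 0) • Eop l q m1 n1 p -
        Eop l q m1 n1 (Eop l q m2 n2 p))) -
      ((if (m2, n2) = ((0 : ℤ), (0 : ℤ)) then μ else 0) •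
        ((if (m1, n1) = ((0 : ℤ), (0 : ℤ)) then μ else 0) • p - Eop l q m1 n1 p) -
      ((if (m1, n1) = ((0 : ℤ), (0 : ℤ)) then μ else 0) • Eop l q m2 n2 p -
        Eop l q m2 n2 (Eop l q m1 n1 p))) =
      Eop l q m1 n1 (Eop l q m2 n2 p) - Eop l q m2 n2 (Eop l q m1 n1 p) := by
    simp only [smul_sub, smul_smul]
    rw [mul_comm (if (m2, n2) = ((0 : ℤ), (0 : ℤ)) then μ else 0)
      (if (m1, n1) = ((0 : ℤ), (0 : ℤ)) then μ else 0)]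
    abel
  rw [h1, core q hq m1 n1 m2 n2 p hS hcl1 hcl2]
  by_cases h0 : ((m1 + m2, n1 + n2) : ℤ × ℤ) = ((0 : ℤ), (0 : ℤ))
  · have hm : m2 = -m1 := by
      have := congrArg Prod.fst h0
      simp only at this
      linarith
    have hn : n2 = -n1 := by
      have := congrArg Prod.snd h0
      simp only at this
      linarith
    have : q ^ (m1 * n2) = q ^ (m2 * n1) := by
      rw [hm, hn]
      ring_nf
    rw [this, sub_self, zero_smul, zero_smul]
  · rw [if_neg h0, zero_smul, zero_sub, smul_neg, ← neg_smul, neg_sub]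
end

section
/- For all 2 ≤ i ≠ j ≤ l and m1,n1,m2,n2 ∈ Z, [e_{ij}(m1,n1), e_{11}(m2,n2)] = 0, and also [e_{ii}(m1,n1), e_{11}(m2,n2)] = 0. -/
open MvPolynomial

lemma support_fin (l : ℕ) (j : Idx l) (C : ℤ × ℤ → V l) (p : V l) :
    (Function.support fun mn : ℤ × ℤ => C mn * pderiv (j, mn.1, mn.2) p).Finite := by
  apply Set.Finite.subset (Set.Finite.image (f := fun v : Idx l × ℤ × ℤ => v.2) p.vars.finite_toSet)
  intro mn hmn
  have h0 : pderiv (j, mn.1, mn.2) p ≠ 0 := by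
    intro h
    apply hmn
    simp [h]
  have hv : (j, mn.1, mn.2) ∈ p.vars := by
    by_contra h
    exact h0 (pderiv_eq_zero_of_notMem_vars h)
  exact ⟨(j, mn.1, mn.2), hv, rfl⟩

lemma rep (l : ℕ) (j : Idx l) (C : ℤ × ℤ → V l) (p : V l) :
    ∑ᶠ mn : ℤ × ℤ, C mn * pderiv (j, mn.1, mn.2) p
      = mkDerivation ℂ (fun v : Idx l × ℤ × ℤ => if v.1 = j then C v.2 else 0) p := by
  induction p using MvPolynomial.induction_on with
  | C a =>
      rw [← MvPolynomial.algebraMap_eq, Derivation.map_algebraMap]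
      simp [pderiv_C]
  | add p1 p2 ih1 ih2 =>
      have key : (fun mn : ℤ × ℤ => C mn * pderiv (j, mn.1, mn.2) (p1 + p2))
          = fun mn => C mn * pderiv (j, mn.1, mn.2) p1 + C mn * pderiv (j, mn.1, mn.2) p2 := by
        funext mn; rw [map_add, mul_add]
      rw [key, finsum_add_distrib (support_fin l j C p1) (support_fin l j C p2), ih1, ih2,
        map_add]
  | mul_X p1 v ih =>
      classical
      have key : (fun mn : ℤ × ℤ => C mn * pderiv (j, mn.1, mn.2) (p1 * X v))
          = fun mn => C mn * pderiv (j, mn.1, mn.2) p1 * X v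
              + C mn * (p1 * if v = (j, mn.1, mn.2) then 1 else 0) := by
        funext mn
        rw [pderiv_mul, pderiv_X, Pi.single_apply, mul_add, mul_assoc]
      have hA : (Function.support fun mn : ℤ × ℤ =>
          C mn * pderiv (j, mn.1, mn.2) p1 * X v).Finite := by
        apply (support_fin l j C p1).subset
        intro mn h
        simp only [Function.mem_support] at h ⊢
        intro h0
        apply h
        rw [h0, zero_mul]
      have hB : (Function.support fun mn : ℤ × ℤ =>
          C mn * (p1 * if v = (j, mn.1, mn.2) then 1 else 0)).Finite := by
        apply Set.Finite.subset (Set.finite_singleton v.2)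
        intro mn h
        simp only [Function.mem_support] at h
        simp only [Set.mem_singleton_iff]
        by_contra hne
        have : v ≠ (j, mn.1, mn.2) := by
          intro hc
          exact hne (by rw [hc])
        simp [this] at h
      rw [key, finsum_add_distrib hA hB, ← finsum_mul _ _, ih]
      have hrhs : (mkDerivation ℂ (fun v : Idx l × ℤ × ℤ => if v.1 = j then C v.2 else 0))
          (p1 * X v)
          = p1 * (if v.1 = j then C v.2 else 0)
            + X v * (mkDerivation ℂ (fun v : Idx l × ℤ × ℤ => if v.1 = j then C v.2 else 0)) p1 := by
        rw [Derivation.leibniz, mkDerivation_X, smul_eq_mul, smul_eq_mul]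
      rw [hrhs]
      by_cases hv : v.1 = j
      · have hsingle : ∑ᶠ mn : ℤ × ℤ, C mn * (p1 * if v = (j, mn.1, mn.2) then 1 else 0)
            = C v.2 * p1 := by
          rw [finsum_eq_single _ v.2]
          · have : v = (j, v.2.1, v.2.2) := by
              ext <;> simp [hv]
            rw [if_pos this]
            ring
          · intro mn hmn
            have : v ≠ (j, mn.1, mn.2) := by
              intro hc
              exact hmn (by rw [hc])
            simp [this]
        rw [hsingle]
        simp only [hv, if_true]
        ring
      · have hzero : ∑ᶠ mn : ℤ × ℤ, C mn * (p1 * if v = (j, mn.1, mn.2) then 1 else 0) = 0 := by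
          apply finsum_eq_zero_of_forall_eq_zero
          intro mn
          have : v ≠ (j, mn.1, mn.2) := by
            intro hc
            apply hv
            rw [hc]
          simp [this]
        rw [hzero, if_neg hv]
        ring

noncomputable instance idxFintype (l : ℕ) : Fintype (Idx l) :=
  Fintype.subtype (Finset.Icc 2 l) (fun x => by simp [Finset.mem_Icc])

/-- Coefficient function of `eGen`. -/
noncomputable def cGen (l : ℕ) (q : ℂ) (i j : Idx l) (m1 n1 : ℤ) : Idx l × ℤ × ℤ → V l :=
  fun v => if v.1 = j then q ^ (v.2.1 * n1) • X (i, m1 + v.2.1, n1 + v.2.2) else 0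

/-- Coefficient function of the derivation part of `e11`. -/
noncomputable def c11 (l : ℕ) (q : ℂ) (m2 n2 : ℤ) : Idx l × ℤ × ℤ → V l :=
  fun v => q ^ (v.2.2 * m2) • X (v.1, m2 + v.2.1, n2 + v.2.2)

lemma eGen_eq (l : ℕ) (q : ℂ) (i j : Idx l) (m1 n1 : ℤ) (p : V l) :
    eGen l q i j m1 n1 p = mkDerivation ℂ (cGen l q i j m1 n1) p := by
  have h := rep l j (fun mn : ℤ × ℤ => q ^ (mn.1 * n1) • X (i, m1 + mn.1, n1 + mn.2)) p
  rw [eGen]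
  rw [show (fun mn : ℤ × ℤ =>
      q ^ (mn.1 * n1) • (X (i, m1 + mn.1, n1 + mn.2) * pderiv (j, mn.1, mn.2) p))
    = fun mn : ℤ × ℤ =>
      (q ^ (mn.1 * n1) • X (i, m1 + mn.1, n1 + mn.2)) * pderiv (j, mn.1, mn.2) p from
    funext fun mn => (smul_mul_assoc _ _ _).symm]
  exact h

lemma mkDerivation_add_apply (l : ℕ) (f g : Idx l × ℤ × ℤ → V l) (p : V l) :
    mkDerivation ℂ (f + g) p = mkDerivation ℂ f p + mkDerivation ℂ g p := by
  have : mkDerivation ℂ (f + g) = mkDerivation ℂ f + mkDerivation ℂ g :=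
    derivation_ext fun v => by simp
  rw [this, Derivation.add_apply]

lemma mkDerivation_sum_apply (l : ℕ) (s : Finset (Idx l)) (c : Idx l → Idx l × ℤ × ℤ → V l)
    (p : V l) :
    ∑ x ∈ s, mkDerivation ℂ (c x) p = mkDerivation ℂ (∑ x ∈ s, c x) p := by
  classical
  induction s using Finset.induction_on with
  | empty =>
      simp only [Finset.sum_empty]
      have : mkDerivation ℂ (0 : Idx l × ℤ × ℤ → V l) = 0 :=
        derivation_ext fun v => by simp
      rw [this, Derivation.zero_apply]
  | insert a s ha ih =>
      rw [Finset.sum_insert ha, Finset.sum_insert ha, ih, mkDerivation_add_apply]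

lemma e11_eq (l : ℕ) (q μ : ℂ) (m2 n2 : ℤ) (p : V l) :
    e11 l q μ m2 n2 p = (if (m2, n2) = ((0 : ℤ), (0 : ℤ)) then μ else 0) • p
      - mkDerivation ℂ (c11 l q m2 n2) p := by
  rw [e11]
  congr 1
  have hinner : ∀ k : Idx l, (∑ᶠ mn : ℤ × ℤ,
      q ^ (mn.2 * m2) • (X (k, m2 + mn.1, n2 + mn.2) * pderiv (k, mn.1, mn.2) p))
      = mkDerivation ℂ (fun v : Idx l × ℤ × ℤ =>
          if v.1 = k then q ^ (v.2.2 * m2) • X (k, m2 + v.2.1, n2 + v.2.2) else 0) p := by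
    intro k
    have h := rep l k (fun mn : ℤ × ℤ => q ^ (mn.2 * m2) • X (k, m2 + mn.1, n2 + mn.2)) p
    rw [show (fun mn : ℤ × ℤ =>
        q ^ (mn.2 * m2) • (X (k, m2 + mn.1, n2 + mn.2) * pderiv (k, mn.1, mn.2) p))
      = fun mn : ℤ × ℤ =>
        (q ^ (mn.2 * m2) • X (k, m2 + mn.1, n2 + mn.2)) * pderiv (k, mn.1, mn.2) p from
      funext fun mn => (smul_mul_assoc _ _ _).symm]
    exact h
  rw [finsum_congr hinner, finsum_eq_sum_of_fintype, mkDerivation_sum_apply]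
  have hc : (∑ x : Idx l, fun v : Idx l × ℤ × ℤ =>
      if v.1 = x then q ^ (v.2.2 * m2) • (X (x, m2 + v.2.1, n2 + v.2.2) : V l) else 0)
      = c11 l q m2 n2 := by
    funext v
    classical
    rw [Finset.sum_apply]
    rw [Finset.sum_ite_eq Finset.univ v.1
      (fun k => q ^ (v.2.2 * m2) • (X (k, m2 + v.2.1, n2 + v.2.2) : V l))]
    simp [c11]
  rw [hc]

lemma comm_key (l : ℕ) (q : ℂ) (hq : q ≠ 0) (i j : Idx l) (m1 n1 m2 n2 : ℤ) (p : V l) :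
    mkDerivation ℂ (cGen l q i j m1 n1) (mkDerivation ℂ (c11 l q m2 n2) p)
      = mkDerivation ℂ (c11 l q m2 n2) (mkDerivation ℂ (cGen l q i j m1 n1) p) := by
  have hcomm : ⁅mkDerivation ℂ (cGen l q i j m1 n1), mkDerivation ℂ (c11 l q m2 n2)⁆
      = (0 : Derivation ℂ (V l) (V l)) := by
    apply derivation_ext
    intro v
    rw [Derivation.commutator_apply, Derivation.zero_apply, sub_eq_zero, mkDerivation_X,
      mkDerivation_X]
    by_cases hv : v.1 = j
    · simp only [c11, cGen, hv, if_true, Derivation.map_smul, mkDerivation_X, if_pos rfl]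
      rw [smul_smul, smul_smul, ← zpow_add₀ hq, ← zpow_add₀ hq]
      rw [show m1 + (m2 + v.2.1) = m2 + (m1 + v.2.1) from by ring,
        show n1 + (n2 + v.2.2) = n2 + (n1 + v.2.2) from by ring]
      congr 1
      ring
    · simp [c11, cGen, hv]
  have := congrArg (fun D : Derivation ℂ (V l) (V l) => D p) hcomm
  simp only [Derivation.commutator_apply, Derivation.zero_apply] at this
  exact sub_eq_zero.mp this

theorem stmt12 (l : ℕ) (hl : 2 ≤ l) (q μ : ℂ) (hq : q ≠ 0)
    (i j : Idx l) (hij : i ≠ j) (m1 n1 m2 n2 : ℤ) :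
    oComm (eGen l q i j m1 n1) (e11 l q μ m2 n2) = (fun _ => 0) ∧
    oComm (eGen l q i i m1 n1) (e11 l q μ m2 n2) = (fun _ => 0) := by
  have main : ∀ (a b : Idx l),
      oComm (eGen l q a b m1 n1) (e11 l q μ m2 n2) = (fun _ => 0) := by
    intro a b
    funext p
    show eGen l q a b m1 n1 (e11 l q μ m2 n2 p)
      - e11 l q μ m2 n2 (eGen l q a b m1 n1 p) = 0
    simp only [eGen_eq, e11_eq]
    rw [map_sub, Derivation.map_smul, comm_key l q hq a b m1 n1 m2 n2 p, sub_self]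
  exact ⟨main i j, main i i⟩
end

section
/- If μ = 0, then the subspace W ⊂ V of polynomials with zero constant term is a proper nonzero submodule of V under the operators {e_{ij}(m,n) : 1 ≤ i,j ≤ l, m,n ∈ Z} ∪ {D1, D2}; in particular each operator in this family maps W into W, so V is reducible. -/
open MvPolynomial

lemma cc_finsum {l : ℕ} {ι : Type*} (f : ι → V l)
    (h : ∀ x, constantCoeff (f x) = 0) :
    constantCoeff (∑ᶠ x, f x) = 0 := by
  by_cases hf : (Function.support f).Finite
  · rw [finsum_eq_sum f hf]
    simp [map_sum, h]
  · rw [finsum_of_infinite_support hf]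
    simp

theorem stmt19 (l : ℕ) (hl : 2 ≤ l) (q : ℂ) (hq : q ≠ 0) :
    (∀ p : V l, constantCoeff p = 0 →
      (∀ (i : Idx l) (m n : ℤ), constantCoeff (eLow l i m n p) = 0) ∧
      (∀ (i j : Idx l) (m n : ℤ), constantCoeff (eGen l q i j m n p) = 0) ∧
      (∀ m n : ℤ, constantCoeff (e11 l q 0 m n p) = 0) ∧
      (∀ (i : Idx l) (m n : ℤ), constantCoeff (eUp l q 0 i m n p) = 0) ∧
      constantCoeff (D1 l p) = 0 ∧ constantCoeff (D2 l p) = 0) ∧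
    (∃ p : V l, constantCoeff p = 0 ∧ p ≠ 0) ∧
    (∃ p : V l, constantCoeff p ≠ 0)  := by
  refine ⟨?_, ?_, ?_⟩
  · intro p hp
    refine ⟨?_, ?_, ?_, ?_, ?_, ?_⟩
    · intro i m n
      simp [eLow]
    · intro i j m n
      apply cc_finsum
      intro x
      simp
    · intro m n
      unfold e11
      rw [map_sub]
      rw [cc_finsum _ (fun j => cc_finsum _ (fun x => by simp))]
      simp [hp]
    · intro i m n
      unfold eUp
      rw [map_sub]
      rw [cc_finsum _ (fun j => cc_finsum _ (fun x => by simp))]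
      simp
    · exact cc_finsum _ (fun i => cc_finsum _ (fun x => by simp))
    · exact cc_finsum _ (fun i => cc_finsum _ (fun x => by simp))
  · exact ⟨X (⟨2, le_refl 2, hl⟩, 0, 0), by simp, X_ne_zero _⟩
  · exact ⟨1, by simp⟩
end
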